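/- arXiv:1409.0153 — 6 statements merged into one kernel-verified Lean document; each statement's English description precedes it below -/
import Mathlib

section
/- Let s : [0,∞) → ℝ be continuously differentiable with s(w) > 0 for all w, let β : [0,∞) → ℝ be continuous, and define p(w) = exp(−∫₀^w (β(v) + s'(v)/2)/(s(v)/2) dv). Let f : [0,∞) → ℝ be twice continuously differentiable such that the function w ↦ ((1/2)·s(w)·f''(w) − β(w)·f'(w))·p(w) is integrable on [0,∞) and s(w)·f'(w)·p(w) → 0 as w → ∞. Then ∫₀^∞ ((1/2)·s(w)·f''(w) − β(w)·f'(w))·p(w) dw = −(1/2)·s(0)·f'(0). -/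
open MeasureTheory intervalIntegral Filter

/-- The basic-adjoint-relationship integral identity: with
`p(w) = exp(−∫₀^w (β(v) + s'(v)/2)/(s(v)/2) dv)`,
if `((1/2)·s·f'' − β·f')·p` is integrable on `[0,∞)` and `s·f'·p → 0` at `∞`, then
`∫₀^∞ ((1/2)·s(w)·f''(w) − β(w)·f'(w))·p(w) dw = −(1/2)·s(0)·f'(0)`. -/
theorem stmt3 (s s' β f f' f'' p : ℝ → ℝ)
    (hs : ∀ w, HasDerivAt s (s' w) w) (hs' : Continuous s')
    (hspos : ∀ w, 0 ≤ w → 0 < s w)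
    (hβ : Continuous β)
    (hf : ∀ w, HasDerivAt f (f' w) w) (hf' : ∀ w, HasDerivAt f' (f'' w) w)
    (hf'' : Continuous f'')
    (hp : ∀ w, p w = Real.exp (-∫ v in (0 : ℝ)..w, (β v + s' v / 2) / (s v / 2)))
    (hint : IntegrableOn (fun w => ((1 / 2) * s w * f'' w - β w * f' w) * p w)
      (Set.Ici 0))
    (hlim : Tendsto (fun w => s w * f' w * p w) atTop (nhds 0)) :
    ∫ w in Set.Ici (0 : ℝ), ((1 / 2) * s w * f'' w - β w * f' w) * p w =
      -(1 / 2) * s 0 * f' 0 := by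
  have hscont : Continuous s := continuous_iff_continuousAt.2 fun x => (hs x).continuousAt
  -- positivity of s on a neighborhood of Ici 0
  obtain ⟨ε, εpos, hε⟩ : ∃ ε > 0, ∀ x ∈ Metric.ball (0 : ℝ) ε, 0 < s x := by
    have h0 : 0 < s 0 := hspos 0 le_rfl
    have hmem : s ⁻¹' Set.Ioi 0 ∈ nhds (0 : ℝ) :=
      (hs 0).continuousAt.preimage_mem_nhds (Ioi_mem_nhds h0)
    rcases Metric.mem_nhds_iff.1 hmem with ⟨ε, εpos, hball⟩
    exact ⟨ε, εpos, fun x hx => hball hx⟩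
  set V : Set ℝ := Set.Ioi (-ε) with hVdef
  have hVopen : IsOpen V := isOpen_Ioi
  have hVpos : ∀ x ∈ V, 0 < s x := by
    intro x hx
    rcases le_or_gt 0 x with h | h
    · exact hspos x h
    · exact hε x (by simp [Real.ball_eq_Ioo]; constructor <;> linarith [Set.mem_Ioi.1 hx])
  have hIciV : Set.Ici (0 : ℝ) ⊆ V := fun x hx => lt_of_lt_of_le (by linarith : -ε < 0) hx
  set q : ℝ → ℝ := fun v => (β v + s' v / 2) / (s v / 2) with hqdef
  have hqcont : ∀ x ∈ V, ContinuousAt q x := by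
    intro x hx
    exact ((hβ.continuousAt).add ((hs'.continuousAt).div_const 2)).div
      (((hs x).continuousAt).div_const 2) (div_pos (hVpos x hx) two_pos).ne'
  have hqint : ∀ w ∈ V, IntervalIntegrable q volume 0 w := by
    intro w hw
    apply ContinuousOn.intervalIntegrable
    intro x hx
    refine ((hqcont x ?_).continuousWithinAt)
    rcases le_or_gt 0 w with h | h
    · have : Set.uIcc (0:ℝ) w ⊆ Set.Ici 0 := by
        rw [Set.uIcc_of_le h]; exact fun y hy => hy.1
      exact hIciV (this hx)
    · have : Set.uIcc (0:ℝ) w ⊆ Set.Ioi (-ε) := by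
        rw [Set.uIcc_of_ge h.le]
        intro y hy
        exact lt_of_lt_of_le (Set.mem_Ioi.1 hw) hy.1
      exact this hx
  set F : ℝ → ℝ := fun w => ∫ v in (0:ℝ)..w, q v with hFdef
  have hF : ∀ w ∈ V, HasDerivAt F (q w) w := by
    intro w hw
    exact intervalIntegral.integral_hasDerivAt_right (hqint w hw)
      (ContinuousAt.stronglyMeasurableAtFilter hVopen hqcont w hw) (hqcont w hw)
  have hpfun : p = fun w => Real.exp (-F w) := funext fun w => hp w
  have hP : ∀ w ∈ V, HasDerivAt p (p w * -q w) w := by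
    intro w hw
    have h := ((hF w hw).neg).exp
    rw [hpfun]
    simpa using h
  set g : ℝ → ℝ := fun w => 1 / 2 * s w * f' w * p w with hgdef
  have hg : ∀ w ∈ V, HasDerivAt g ((1 / 2 * s w * f'' w - β w * f' w) * p w) w := by
    intro w hw
    have h1 : HasDerivAt (fun w => 1 / 2 * s w * f' w)
        ((1 / 2 * s' w) * f' w + (1 / 2 * s w) * f'' w) w :=
      (((hs w).const_mul (1/2 : ℝ)).mul (hf' w))
    have h2 : HasDerivAt (fun y => 1 / 2 * s y * f' y * p y) _ w := h1.mul (hP w hw)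
    convert h2 using 1
    have hsne : s w ≠ 0 := (hVpos w hw).ne'
    simp only [hqdef]
    field_simp
    ring
  have hcontg : ContinuousOn g (Set.Ici 0) := fun x hx =>
    ((hg x (hIciV hx)).continuousAt).continuousWithinAt
  have hlimg : Tendsto g atTop (nhds 0) := by
    have h := hlim.const_mul (1/2 : ℝ)
    simp only [mul_zero] at h
    refine h.congr fun w => by simp [hgdef]; ring
  have hintIoi : IntegrableOn (fun w => (1 / 2 * s w * f'' w - β w * f' w) * p w)
      (Set.Ioi 0) := hint.mono_set Set.Ioi_subset_Ici_self
  rw [MeasureTheory.integral_Ici_eq_integral_Ioi]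
  rw [MeasureTheory.integral_Ioi_of_hasDerivAt_of_tendsto'
    (fun x hx => hg x (hIciV hx)) hintIoi hlimg]
  have hp0 : p 0 = 1 := by simp [hp 0]
  simp [hgdef, hp0]
end

section
/- Let θ : ℝ → ℝ be continuous and bounded, and let σ > 0, m > 0, m_e > 0, v ∈ ℝ, W > 0 and G_W ∈ ℝ. Then there exists a unique continuously differentiable function G : [0,W] → ℝ with terminal value G(W) = G_W satisfying, for all w ∈ [0,W], (σ²/2)·G'(w) = v − min_{k ∈ [0, w/m_e]} ( w/m + k·(1 − m_e/m) − θ(k)·G(w) ). -/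
open Set

section HJBAux


lemma sInf_image_sub_le {s : Set ℝ} (hs : IsCompact s) (hne : s.Nonempty)
    {g h : ℝ → ℝ} (hg : ContinuousOn g s) (hh : ContinuousOn h s) {d : ℝ}
    (hd : ∀ k ∈ s, |g k - h k| ≤ d) : |sInf (g '' s) - sInf (h '' s)| ≤ d := by
  have bg : BddBelow (g '' s) := hs.bddBelow_image hg
  have bh : BddBelow (h '' s) := hs.bddBelow_image hh
  have h1 : sInf (g '' s) - d ≤ sInf (h '' s) := by
    apply le_csInf (hne.image h)
    rintro y ⟨k, hk, rfl⟩
    have h1 := csInf_le bg (mem_image_of_mem g hk)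
    have h2 := (abs_le.mp (hd k hk)).2
    linarith
  have h2 : sInf (h '' s) - d ≤ sInf (g '' s) := by
    apply le_csInf (hne.image g)
    rintro y ⟨k, hk, rfl⟩
    have h1 := csInf_le bh (mem_image_of_mem h hk)
    have h2 := (abs_le.mp (hd k hk)).1
    linarith
  rw [abs_le]
  constructor <;> linarith


/-- Gluing two local solutions of an ODE at a junction point. -/
lemma hjb_glue {F : ℝ → ℝ → ℝ} {c' c b : ℝ} (hc'c : c' ≤ c) (hcb : c ≤ b)
    {f H : ℝ → ℝ} (hHc : H c = f c)
    (hf : ∀ t ∈ Icc c b, HasDerivWithinAt f (F t (f t)) (Icc c b) t)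
    (hH : ∀ t ∈ Icc c' c, HasDerivWithinAt H (F t (H t)) (Icc c' c) t) :
    ∃ K : ℝ → ℝ, K b = f b ∧
      ∀ t ∈ Icc c' b, HasDerivWithinAt K (F t (K t)) (Icc c' b) t := by
  classical
  set K : ℝ → ℝ := fun w => if w ≤ c then H w else f w with hKdef
  have hKf : ∀ x ∈ Icc c b, K x = f x := by
    intro x hx
    by_cases hxc : x ≤ c
    · have : x = c := le_antisymm hxc hx.1
      simp [K, this, hHc]
    · simp [K, hxc]
  have hKH : ∀ x ∈ Icc c' c, K x = H x := fun x hx => if_pos hx.2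
  refine ⟨K, hKf b ⟨hcb, le_rfl⟩, ?_⟩
  intro t ht
  have hunion : Icc c' c ∪ Icc c b = Icc c' b := Icc_union_Icc_eq_Icc hc'c hcb
  rw [← hunion]
  have h1 : HasDerivWithinAt K (F t (K t)) (Icc c' c) t := by
    by_cases htc : t ≤ c
    · have ht' : t ∈ Icc c' c := ⟨ht.1, htc⟩
      have e : K t = H t := hKH t ht'
      have := (hH t ht').congr hKH e
      rwa [← e] at this
    · have : t ∉ closure (Icc c' c) := by
        rw [closure_Icc]
        exact fun hmem => htc hmem.2
      exact HasFDerivWithinAt.of_notMem_closure this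
  have h2 : HasDerivWithinAt K (F t (K t)) (Icc c b) t := by
    by_cases htc : c ≤ t
    · have ht' : t ∈ Icc c b := ⟨htc, ht.2⟩
      have e : K t = f t := hKf t ht'
      have := (hf t ht').congr hKf e
      rwa [← e] at this
    · have : t ∉ closure (Icc c b) := by
        rw [closure_Icc]
        exact fun hmem => htc hmem.1
      exact HasFDerivWithinAt.of_notMem_closure this
  exact h1.union h2

/-- Global existence for a terminal value problem with globally Lipschitz RHS. -/
lemma hjb_exists {F : ℝ → ℝ → ℝ} {L : NNReal} (hlip : ∀ t, LipschitzWith L (F t))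
    {a b : ℝ} (hab : a ≤ b) (hcont : ∀ x, ContinuousOn (fun t => F t x) (Icc a b))
    (xb : ℝ) :
    ∃ f : ℝ → ℝ, f b = xb ∧ ∀ t ∈ Icc a b, HasDerivWithinAt f (F t (f t)) (Icc a b) t := by
  set h : ℝ := 1 / (2 * ((L : ℝ) + 1)) with hhdef
  have hL0 : (0:ℝ) ≤ L := L.2
  have hh : 0 < h := by positivity
  have hLh : (L : ℝ) * h ≤ 1 / 2 := by
    rw [hhdef, mul_one_div, div_le_div_iff₀ (by positivity) (by norm_num : (0:ℝ) < 2)]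
    nlinarith
  have key : ∀ n : ℕ, ∃ f : ℝ → ℝ, f b = xb ∧ ∀ t ∈ Icc (max a (b - n * h)) b,
      HasDerivWithinAt f (F t (f t)) (Icc (max a (b - n * h)) b) t := by
    intro n
    induction n with
    | zero =>
      refine ⟨fun _ => xb, rfl, ?_⟩
      intro t ht
      have hmb : max a (b - (0:ℕ) * h) = b := by
        simp [hab]
      rw [hmb] at ht ⊢
      rw [Icc_self] at ht ⊢
      rw [mem_singleton_iff] at ht
      subst ht
      exact HasFDerivWithinAt.singleton
    | succ n ih =>
      obtain ⟨f, hfb, hf⟩ := ih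
      set c := max a (b - n * h) with hcdef
      set c' := max a (b - (n + 1 : ℕ) * h) with hc'def
      have hstep : b - (n + 1 : ℕ) * h ≤ b - n * h := by
        push_cast
        nlinarith
      have hc'c : c' ≤ c := max_le_max le_rfl hstep
      have hcb : c ≤ b := max_le hab (by nlinarith [mul_nonneg (Nat.cast_nonneg (α := ℝ) n) hh.le])
      have hac' : a ≤ c' := le_max_left _ _
      rcases eq_or_lt_of_le hc'c with heq | hlt
      · rw [← heq] at hf
        exact ⟨f, hfb, hf⟩
      · have hca : a < c := lt_of_le_of_lt hac' hlt
        have hceq : c = b - n * h := by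
          rcases max_choice a (b - n * h) with h1 | h1
          · rw [hcdef] at hca; rw [h1] at hca; exact absurd hca (lt_irrefl a)
          · exact h1
        have hcc' : c - c' ≤ h := by
          have h1 : b - (n + 1 : ℕ) * h ≤ c' := le_max_right _ _
          have : c - c' ≤ (b - n * h) - (b - (n + 1 : ℕ) * h) := by
            rw [hceq]; linarith
          push_cast at this
          linarith
        have hIcc_sub : Icc c' c ⊆ Icc a b := Icc_subset_Icc hac' hcb
        obtain ⟨M0, hM0⟩ := (isCompact_Icc (a := a) (b := b)).exists_bound_of_continuousOn
          (hcont (f c))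
        set M := max M0 0 with hMdef
        have hM : 0 ≤ M := le_max_right _ _
        have hMb : ∀ t ∈ Icc a b, |F t (f c)| ≤ M := fun t ht =>
          le_trans (by simpa [Real.norm_eq_abs] using hM0 t ht) (le_max_left _ _)
        set R := 2 * (M + 1) * h with hRdef
        have hR0 : 0 ≤ R := by positivity
        set C := M + (L : ℝ) * R with hCdef
        have hC0' : 0 ≤ C := by rw [hCdef]; positivity
        have hpl : IsPicardLindelof F (tmin := c') (tmax := c) ⟨c, hc'c, le_rfl⟩ (f c)
            ⟨R, hR0⟩ 0 ⟨C, hC0'⟩ L := by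
          refine ⟨fun t _ => (hlip t).lipschitzOnWith,
            fun x _ => (hcont x).mono hIcc_sub, ?_, ?_⟩
          · intro t ht x hx
            change ‖F t x‖ ≤ C
            have hd : dist (F t x) (F t (f c)) ≤ (L : ℝ) * R := by
              calc dist (F t x) (F t (f c)) ≤ (L : ℝ) * dist x (f c) :=
                    (hlip t).dist_le_mul x (f c)
                _ ≤ (L : ℝ) * R := by
                    exact mul_le_mul_of_nonneg_left (Metric.mem_closedBall.mp hx) hL0
            have := hMb t (hIcc_sub ht)
            rw [Real.dist_eq] at hd
            rw [Real.norm_eq_abs]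
            have h3 : |F t x| ≤ |F t x - F t (f c)| + |F t (f c)| := by
              calc |F t x| = |(F t x - F t (f c)) + F t (f c)| := by ring_nf
                _ ≤ _ := abs_add_le _ _
            rw [hCdef]
            linarith
          · show C * max (c - c) (c - c') ≤ R - 0
            rw [sub_zero]
            have hmax : max (c - c) (c - c') = c - c' := by
              rw [max_eq_right]; linarith
            rw [hmax]
            have hC0 : 0 ≤ C := by
              rw [hCdef]; positivity
            calc C * (c - c') ≤ C * h := mul_le_mul_of_nonneg_left hcc' hC0
              _ = M * h + ((L:ℝ) * h) * R := by rw [hCdef]; ring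
              _ ≤ (M + 1) * h + (1/2) * R := by
                  nlinarith [mul_le_mul_of_nonneg_right hLh hR0]
              _ = R := by rw [hRdef]; ring
        obtain ⟨H, hHc, hH⟩ := hpl.exists_eq_forall_mem_Icc_hasDerivWithinAt₀
        obtain ⟨K, hKb, hK⟩ := hjb_glue hc'c hcb hHc hf hH
        exact ⟨K, by rw [hKb, hfb], hK⟩
  obtain ⟨n, hn⟩ := exists_nat_ge ((b - a) / h)
  have hna : b - n * h ≤ a := by
    have := (div_le_iff₀ hh).mp hn
    linarith
  obtain ⟨f, hfb, hf⟩ := key n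
  rw [max_eq_left hna] at hf
  exact ⟨f, hfb, hf⟩


/-- Uniqueness for the terminal value problem with globally Lipschitz RHS. -/
lemma hjb_uniq {F : ℝ → ℝ → ℝ} {L : NNReal} (hlip : ∀ t, LipschitzWith L (F t))
    {a b : ℝ} {f g : ℝ → ℝ}
    (hfc : ContinuousOn f (Icc a b))
    (hf : ∀ t ∈ Icc a b, HasDerivWithinAt f (F t (f t)) (Icc a b) t)
    (hgc : ContinuousOn g (Icc a b))
    (hg : ∀ t ∈ Icc a b, HasDerivWithinAt g (F t (g t)) (Icc a b) t)
    (hfg : f b = g b) : EqOn f g (Icc a b) := by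
  have hmem : ∀ t ∈ Ioc a b, Icc a b ∈ nhdsWithin t (Iic t) := by
    intro t ht
    rw [mem_nhdsWithin]
    exact ⟨Ioi a, isOpen_Ioi, ht.1, fun x hx => ⟨le_of_lt hx.1, le_trans hx.2 ht.2⟩⟩
  exact ODE_solution_unique_of_mem_Icc_left (v := F) (s := fun _ => univ)
    (fun t _ => (hlip t).lipschitzOnWith)
    hfc (fun t ht => (hf t ⟨le_of_lt ht.1, ht.2⟩).mono_of_mem_nhdsWithin (hmem t ht))
    (fun t _ => mem_univ _)
    hgc (fun t ht => (hg t ⟨le_of_lt ht.1, ht.2⟩).mono_of_mem_nhdsWithin (hmem t ht))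
    (fun t _ => mem_univ _) hfg

end HJBAux


/-- `G` is a continuously differentiable solution on `[0,W]` of the HJB ODE
`(σ²/2)·G'(w) = v − min_{k ∈ [0,w/m_e]} ( w/m + k·(1−m_e/m) − θ(k)·G(w) )`
with terminal value `G(W) = GW`. -/
def IsHJBSolution (θ : ℝ → ℝ) (σ m me v W GW : ℝ) (G : ℝ → ℝ) : Prop :=
  ContinuousOn G (Set.Icc 0 W) ∧ G W = GW ∧
  ∀ w ∈ Set.Icc 0 W,
    HasDerivWithinAt G
      ((v - sInf ((fun k => w / m + k * (1 - me / m) - θ k * G w) ''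
          Set.Icc 0 (w / me))) / (σ ^ 2 / 2))
      (Set.Icc 0 W) w

/-- Existence and uniqueness of the continuously differentiable solution of the HJB
terminal value problem on `[0,W]`, for `θ` continuous and bounded. -/
theorem stmt7 (θ : ℝ → ℝ) (hθc : Continuous θ) (hθb : ∃ C, ∀ k, |θ k| ≤ C)
    (σ m me v W GW : ℝ) (hσ : 0 < σ) (hm : 0 < m) (hme : 0 < me) (hW : 0 < W) :
    (∃ G : ℝ → ℝ, IsHJBSolution θ σ m me v W GW G) ∧
    (∀ G₁ G₂ : ℝ → ℝ, IsHJBSolution θ σ m me v W GW G₁ →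
      IsHJBSolution θ σ m me v W GW G₂ → Set.EqOn G₁ G₂ (Set.Icc 0 W)) := by
  obtain ⟨Cθ, hCθ⟩ := hθb
  have hCθ0 : 0 ≤ Cθ := le_trans (abs_nonneg _) (hCθ 0)
  have hσ2 : 0 < σ ^ 2 / 2 := by positivity
  set F : ℝ → ℝ → ℝ := fun w x =>
    (v - sInf ((fun k => w / m + k * (1 - me / m) - θ k * x) '' Set.Icc 0 (w / me)))
      / (σ ^ 2 / 2) with hFdef
  set L : NNReal := ⟨Cθ / (σ ^ 2 / 2), by positivity⟩ with hLdef
  have hLc : (L : ℝ) = Cθ / (σ ^ 2 / 2) := rfl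
  have hlip : ∀ w, LipschitzWith L (F w) := by
    intro w
    apply LipschitzWith.of_dist_le_mul
    intro x y
    rw [Real.dist_eq, Real.dist_eq, hLc]
    have hdiff : F w x - F w y =
        (sInf ((fun k => w / m + k * (1 - me / m) - θ k * y) '' Set.Icc 0 (w / me))
          - sInf ((fun k => w / m + k * (1 - me / m) - θ k * x) '' Set.Icc 0 (w / me)))
          / (σ ^ 2 / 2) := by
      rw [hFdef]
      ring
    by_cases hw : (0:ℝ) ≤ w / me
    · have hne : (Set.Icc (0:ℝ) (w / me)).Nonempty := Set.nonempty_Icc.mpr hw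
      have key : |sInf ((fun k => w / m + k * (1 - me / m) - θ k * y) '' Set.Icc 0 (w / me))
          - sInf ((fun k => w / m + k * (1 - me / m) - θ k * x) '' Set.Icc 0 (w / me))|
          ≤ Cθ * |x - y| := by
        apply sInf_image_sub_le isCompact_Icc hne
        · apply Continuous.continuousOn; fun_prop
        · apply Continuous.continuousOn; fun_prop
        · intro k hk
          have e : (w / m + k * (1 - me / m) - θ k * y)
              - (w / m + k * (1 - me / m) - θ k * x) = θ k * (x - y) := by ring
          rw [e, abs_mul]
          exact mul_le_mul_of_nonneg_right (hCθ k) (abs_nonneg _) |>.trans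
            (mul_le_mul_of_nonneg_left le_rfl hCθ0)
      rw [hdiff, abs_div, abs_of_pos hσ2, div_mul_eq_mul_div]
      have : |sInf ((fun k => w / m + k * (1 - me / m) - θ k * y) '' Set.Icc 0 (w / me))
          - sInf ((fun k => w / m + k * (1 - me / m) - θ k * x) '' Set.Icc 0 (w / me))|
            / (σ ^ 2 / 2) ≤ Cθ * |x - y| / (σ ^ 2 / 2) := by gcongr
      exact this.trans (le_of_eq (by ring))
    · have hempty : Set.Icc (0:ℝ) (w / me) = ∅ := Set.Icc_eq_empty hw
      have : F w x = F w y := by rw [hFdef]; simp [hempty]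
      rw [this, sub_self, abs_zero]
      positivity
  have hcont : ∀ x, ContinuousOn (fun w => F w x) (Set.Icc 0 W) := by
    intro x
    have hc2 : Continuous (Function.uncurry fun w u =>
        w / m + (w / me * u) * (1 - me / m) - θ (w / me * u) * x) := by
      apply Continuous.sub
      apply Continuous.add
      · fun_prop
      · fun_prop
      · exact (hθc.comp (by fun_prop)).mul continuous_const
    have hc3 : Continuous fun w : ℝ => sInf ((fun u =>
        w / m + (w / me * u) * (1 - me / m) - θ (w / me * u) * x) '' Set.Icc 0 1) :=
      IsCompact.continuous_sInf isCompact_Icc hc2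
    have hc4 : Continuous fun w : ℝ => (v - sInf ((fun u =>
        w / m + (w / me * u) * (1 - me / m) - θ (w / me * u) * x) '' Set.Icc 0 1))
          / (σ ^ 2 / 2) := by fun_prop
    apply (hc4.continuousOn).congr
    intro w hw
    have hwme : (0:ℝ) ≤ w / me := div_nonneg hw.1 hme.le
    have him : Set.Icc (0:ℝ) (w / me) = (fun u => w / me * u) '' Set.Icc 0 1 := by
      rw [Set.image_mul_left_Icc hwme zero_le_one]
      simp
    have heqInf : (fun k => w / m + k * (1 - me / m) - θ k * x) '' Set.Icc 0 (w / me)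
        = (fun u => w / m + (w / me * u) * (1 - me / m) - θ (w / me * u) * x) '' Set.Icc 0 1 := by
      rw [him, Set.image_image]
    show (v - sInf ((fun k => w / m + k * (1 - me / m) - θ k * x) ''
        Set.Icc 0 (w / me))) / (σ ^ 2 / 2) = _
    rw [heqInf]
  obtain ⟨G, hGW, hG⟩ := hjb_exists hlip hW.le hcont GW
  constructor
  · exact ⟨G, fun w hw => (hG w hw).continuousWithinAt, hGW, hG⟩
  · intro G₁ G₂ h₁ h₂
    exact hjb_uniq hlip h₁.1 h₁.2.2 h₂.1 h₂.2.2 (by rw [h₁.2.1, h₂.2.1])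
end

section
/- Let θ : ℝ → ℝ be continuous and bounded, and let σ > 0, m > 0, m_e > 0, W > 0 and v₁ ≥ v₂ be reals. Suppose G₁, G₂ : [0,W] → ℝ are differentiable, satisfy G₁(0) = G₂(0), and for i ∈ {1,2} and all w ∈ [0,W] satisfy (σ²/2)·G_i'(w) = v_i − min_{k ∈ [0, w/m_e]} ( w/m + k·(1 − m_e/m) − θ(k)·G_i(w) ). Then G₁(w) ≥ G₂(w) for all w ∈ [0,W]. -/
/-- Comparison result for the HJB ODE: two solutions with the same initial value
and average-cost guesses `v₁ ≥ v₂` satisfy `G₁ ≥ G₂` on `[0,W]`. -/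
theorem stmt9 (θ : ℝ → ℝ) (hθc : Continuous θ) (hθb : ∃ C, ∀ k, |θ k| ≤ C)
    (σ m me W v₁ v₂ : ℝ) (hσ : 0 < σ) (hm : 0 < m) (hme : 0 < me) (hW : 0 < W)
    (hv : v₁ ≥ v₂)
    (G₁ G₂ : ℝ → ℝ) (h0 : G₁ 0 = G₂ 0)
    (hG₁ : ∀ w ∈ Set.Icc 0 W,
      HasDerivWithinAt G₁
        ((v₁ - sInf ((fun k => w / m + k * (1 - me / m) - θ k * G₁ w) ''
            Set.Icc 0 (w / me))) / (σ ^ 2 / 2))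
        (Set.Icc 0 W) w)
    (hG₂ : ∀ w ∈ Set.Icc 0 W,
      HasDerivWithinAt G₂
        ((v₂ - sInf ((fun k => w / m + k * (1 - me / m) - θ k * G₂ w) ''
            Set.Icc 0 (w / me))) / (σ ^ 2 / 2))
        (Set.Icc 0 W) w) :
    ∀ w ∈ Set.Icc 0 W, G₁ w ≥ G₂ w := by
  obtain ⟨C, hC⟩ := hθb
  have hC0 : 0 ≤ C := le_trans (abs_nonneg _) (hC 0)
  have hσ2 : (0:ℝ) < σ ^ 2 / 2 := by positivity
  set K : ℝ := 2 * C / σ ^ 2 + 1 with hK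
  have hKpos : 0 < K := by positivity
  have hCK : C / (σ ^ 2 / 2) < K := by
    have : C / (σ ^ 2 / 2) = 2 * C / σ ^ 2 := by
      field_simp
    rw [this, hK]; linarith
  set h : ℝ → ℝ := fun w => G₂ w - G₁ w with hh
  set d₁ : ℝ → ℝ := fun w =>
    (v₁ - sInf ((fun k => w / m + k * (1 - me / m) - θ k * G₁ w) ''
      Set.Icc 0 (w / me))) / (σ ^ 2 / 2) with hd₁
  set d₂ : ℝ → ℝ := fun w =>
    (v₂ - sInf ((fun k => w / m + k * (1 - me / m) - θ k * G₂ w) ''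
      Set.Icc 0 (w / me))) / (σ ^ 2 / 2) with hd₂
  have hderiv : ∀ w ∈ Set.Icc 0 W,
      HasDerivWithinAt h (d₂ w - d₁ w) (Set.Icc 0 W) w := fun w hw =>
    (hG₂ w hw).sub (hG₁ w hw)
  have hcont : ContinuousOn h (Set.Icc 0 W) := fun w hw =>
    (hderiv w hw).continuousWithinAt
  -- key differential inequality at points where h ≥ 0
  have key : ∀ w ∈ Set.Icc 0 W, 0 ≤ h w →
      d₂ w - d₁ w ≤ C * h w / (σ ^ 2 / 2) := by
    intro w hw hpos
    have hwme : (0:ℝ) ≤ w / me := div_nonneg hw.1 hme.le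
    have hne : (Set.Icc (0:ℝ) (w / me)).Nonempty := ⟨0, le_refl 0, hwme⟩
    set f₁ : ℝ → ℝ := fun k => w / m + k * (1 - me / m) - θ k * G₁ w with hf₁
    set f₂ : ℝ → ℝ := fun k => w / m + k * (1 - me / m) - θ k * G₂ w with hf₂
    have hcont₁ : Continuous f₁ := by
      refine Continuous.sub (by continuity) ((hθc.mul continuous_const))
    have hbdd₁ : BddBelow (f₁ '' Set.Icc 0 (w / me)) :=
      (isCompact_Icc.image hcont₁).bddBelow
    -- sInf (f₁ '' S) ≤ sInf (f₂ '' S) + C * h w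
    have hinf : sInf (f₁ '' Set.Icc 0 (w / me)) ≤
        sInf (f₂ '' Set.Icc 0 (w / me)) + C * h w := by
      rw [← sub_le_iff_le_add]
      apply le_csInf (hne.image _)
      rintro y ⟨k, hk, rfl⟩
      have h1 : sInf (f₁ '' Set.Icc 0 (w / me)) ≤ f₁ k :=
        csInf_le hbdd₁ (Set.mem_image_of_mem _ hk)
      have h2 : f₁ k ≤ f₂ k + C * h w := by
        have : f₁ k - f₂ k = θ k * h w := by
          simp only [hf₁, hf₂, hh]; ring
        have hθk : θ k * h w ≤ C * h w :=
          mul_le_mul_of_nonneg_right (le_trans (le_abs_self _) (hC k)) hpos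
        linarith
      exact sub_le_iff_le_add.mpr (h1.trans h2)
    have : d₂ w - d₁ w = ((v₂ - v₁) +
        (sInf (f₁ '' Set.Icc 0 (w / me)) - sInf (f₂ '' Set.Icc 0 (w / me))))
          / (σ ^ 2 / 2) := by
      simp only [hd₁, hd₂, hf₁, hf₂]; ring
    rw [this]
    gcongr
    · linarith
  -- show h w ≤ ε * exp (K w) for every ε > 0
  have main : ∀ ε > (0:ℝ), ∀ w ∈ Set.Icc 0 W, h w ≤ ε * Real.exp (K * w) := by
    intro ε hε
    have hB : ∀ x : ℝ, HasDerivAt (fun t => ε * Real.exp (K * t))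
        (ε * (Real.exp (K * x) * K)) x := by
      intro x
      exact ((Real.hasDerivAt_exp (K * x)).comp x
        ((hasDerivAt_id x).const_mul K |>.congr_deriv (by ring))).const_mul ε
    refine image_le_of_deriv_right_lt_deriv_boundary (f' := fun x => d₂ x - d₁ x) hcont ?_ ?_ hB ?_
    · intro x hx
      refine (hderiv x ⟨hx.1, hx.2.le⟩).mono_of_mem_nhdsWithin ?_
      refine Filter.mem_of_superset (Filter.inter_mem self_mem_nhdsWithin
        (nhdsWithin_le_nhds (Iio_mem_nhds hx.2))) ?_
      rintro y ⟨hy1, hy2⟩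
      exact ⟨le_trans hx.1 hy1, le_of_lt hy2⟩
    · simp only [hh, h0, sub_self, mul_zero, Real.exp_zero, mul_one]
      linarith [h0]
    · intro x hx hEq
      have hx' : x ∈ Set.Icc 0 W := ⟨hx.1, hx.2.le⟩
      have hBpos : 0 < ε * Real.exp (K * x) := by positivity
      have hpos : 0 < h x := hEq ▸ hBpos
      have h1 := key x hx' hpos.le
      have h2 : C * h x / (σ ^ 2 / 2) < K * h x := by
        have heq : C * h x / (σ ^ 2 / 2) = (C / (σ ^ 2 / 2)) * h x := by ring
        rw [heq]
        exact mul_lt_mul_of_pos_right hCK hpos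
      calc d₂ x - d₁ x ≤ C * h x / (σ ^ 2 / 2) := h1
        _ < K * h x := h2
        _ = ε * (Real.exp (K * x) * K) := by rw [hEq]; ring
  intro w hw
  have hfin : h w ≤ 0 := by
    refine le_of_forall_pos_le_add ?_
    intro δ hδ
    have hεpos : 0 < δ / Real.exp (K * w) := by positivity
    have := main _ hεpos w hw
    rw [div_mul_cancel₀] at this
    · linarith
    · positivity
  simpa [hh, ge_iff_le, sub_nonpos] using hfin
end

section
/- Let g : ℝ → ℝ be Lipschitz continuous and let x : [0,∞) → ℝ be continuous with x(0) ≥ 0. Suppose for i = 1, 2 the pairs (y_i, z_i) of continuous functions from [0,∞) to ℝ satisfy: (i) z_i(t) = ∫₀^t g(z_i(s)) ds + x(t) + y_i(t) for all t ≥ 0; (ii) z_i(t) ≥ 0 for all t ≥ 0; (iii) y_i(0) = 0 and y_i is nondecreasing; (iv) for every t ≥ 0, the Lebesgue–Stieltjes measure induced by y_i assigns measure zero to the set {s ∈ [0,t] : z_i(s) > 0} (equivalently, ∫₀^t z_i(s) dy_i(s) = 0). Then z₁ = z₂ and y₁ = y₂. -/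
/-- `(y, z)` solves the one-dimensional Skorokhod reflection problem with
state-dependent drift `g` and input path `x`: `z(t) = ∫₀^t g(z(s)) ds + x(t) + y(t)`,
`z ≥ 0`, `y(0) = 0`, `y` nondecreasing, and `y` increases only when `z` is at zero
(equivalently, the Lebesgue–Stieltjes measure of `y` gives zero mass to `{z > 0}`,
i.e. `∫₀^t z dy = 0`). -/
def IsSkorokhodSolution (g x y z : ℝ → ℝ) : Prop :=
  ContinuousOn y (Set.Ici 0) ∧ ContinuousOn z (Set.Ici 0) ∧
  (∀ t, 0 ≤ t → z t = (∫ s in (0 : ℝ)..t, g (z s)) + x t + y t) ∧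
  (∀ t, 0 ≤ t → 0 ≤ z t) ∧
  y 0 = 0 ∧ MonotoneOn y (Set.Ici 0) ∧
  (∀ a b, 0 ≤ a → a ≤ b → (∀ u ∈ Set.Icc a b, 0 < z u) → y a = y b)

open MeasureTheory intervalIntegral Set Filter

lemma skorokhod_key (g : ℝ → ℝ) (L : NNReal) (hL : LipschitzWith L g)
    (x y₁ z₁ y₂ z₂ : ℝ → ℝ)
    (h1 : IsSkorokhodSolution g x y₁ z₁) (h2 : IsSkorokhodSolution g x y₂ z₂)
    {t : ℝ} (ht : 0 ≤ t) :
    z₁ t - z₂ t ≤ 2 * L * ∫ u in (0:ℝ)..t, |z₁ u - z₂ u| := by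
  obtain ⟨hy₁c, hz₁c, heq₁, hz₁n, hy₁0, hy₁m, hfl₁⟩ := h1
  obtain ⟨hy₂c, hz₂c, heq₂, hz₂n, hy₂0, hy₂m, hfl₂⟩ := h2
  have hsub : Set.uIcc (0:ℝ) t ⊆ Set.Ici 0 := by
    rw [Set.uIcc_of_le ht]; exact Set.Icc_subset_Ici_self
  have hΔc : ContinuousOn (fun u => |z₁ u - z₂ u|) (Set.Ici 0) := (hz₁c.sub hz₂c).abs
  have hΔint : IntervalIntegrable (fun u => |z₁ u - z₂ u|) volume 0 t :=
    (hΔc.mono hsub).intervalIntegrable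
  set I := ∫ u in (0:ℝ)..t, |z₁ u - z₂ u| with hI
  have hInn : 0 ≤ I := intervalIntegral.integral_nonneg ht (fun u _ => abs_nonneg _)
  -- drift estimate
  have hdrift : ∀ s, 0 ≤ s → s ≤ t →
      |(∫ u in (0:ℝ)..s, g (z₁ u)) - ∫ u in (0:ℝ)..s, g (z₂ u)| ≤ L * I := by
    intro s hs hst
    have hsub' : Set.uIcc (0:ℝ) s ⊆ Set.Ici 0 := by
      rw [Set.uIcc_of_le hs]; exact Set.Icc_subset_Ici_self
    have hi1 : IntervalIntegrable (fun u => g (z₁ u)) volume 0 s :=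
      ((hL.continuous.comp_continuousOn hz₁c).mono hsub').intervalIntegrable
    have hi2 : IntervalIntegrable (fun u => g (z₂ u)) volume 0 s :=
      ((hL.continuous.comp_continuousOn hz₂c).mono hsub').intervalIntegrable
    rw [← intervalIntegral.integral_sub hi1 hi2]
    calc |∫ u in (0:ℝ)..s, (g (z₁ u) - g (z₂ u))|
        ≤ ∫ u in (0:ℝ)..s, |g (z₁ u) - g (z₂ u)| :=
          intervalIntegral.abs_integral_le_integral_abs hs
      _ ≤ ∫ u in (0:ℝ)..s, (L : ℝ) * |z₁ u - z₂ u| := by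
          apply intervalIntegral.integral_mono_on hs (hi1.sub hi2).abs
            (((hΔc.mono hsub').intervalIntegrable).const_mul _)
          intro u hu
          have := hL.dist_le_mul (z₁ u) (z₂ u)
          simpa [Real.dist_eq] using this
      _ = (L : ℝ) * ∫ u in (0:ℝ)..s, |z₁ u - z₂ u| := intervalIntegral.integral_const_mul _ _
      _ ≤ (L : ℝ) * I := by
          apply mul_le_mul_of_nonneg_left _ L.coe_nonneg
          apply intervalIntegral.integral_mono_interval le_rfl hs hst _ hΔint
          filter_upwards with u using abs_nonneg _
  by_cases hzt : z₁ t ≤ z₂ t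
  · have : 0 ≤ 2 * (L : ℝ) * I := by positivity
    linarith
  push_neg at hzt
  set S := Set.Icc 0 t ∩ (fun s => z₁ s - z₂ s) ⁻¹' Set.Iic 0 with hS
  have hz0 : z₁ 0 = z₂ 0 := by
    have e1 := heq₁ 0 le_rfl; have e2 := heq₂ 0 le_rfl
    simp [intervalIntegral.integral_same, hy₁0, hy₂0] at e1 e2
    rw [e1, e2]
  have hS0 : (0:ℝ) ∈ S := ⟨⟨le_rfl, ht⟩, by simp [hz0]⟩
  have hSbdd : BddAbove S := ⟨t, fun s hs => hs.1.2⟩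
  have hSclosed : IsClosed S :=
    ((hz₁c.sub hz₂c).mono (Set.Icc_subset_Ici_self)).preimage_isClosed_of_isClosed
      isClosed_Icc isClosed_Iic
  set τ := sSup S with hτ
  have hτS : τ ∈ S := hSclosed.csSup_mem ⟨0, hS0⟩ hSbdd
  have hτ0 : 0 ≤ τ := hτS.1.1
  have hτt : τ ≤ t := hτS.1.2
  have hzττ : z₁ τ ≤ z₂ τ := sub_nonpos.1 hτS.2
  have hτlt : τ < t := hτt.lt_of_ne (fun h => absurd (h ▸ hzττ) (not_le.2 hzt))
  have hpos : ∀ u, τ < u → u ≤ t → 0 < z₁ u := by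
    intro u hu hut
    have hu0 : 0 ≤ u := hτ0.trans hu.le
    by_contra h
    push_neg at h
    have hmem : u ∈ S := ⟨⟨hu0, hut⟩, by
      have := hz₂n u hu0
      simp only [Set.mem_preimage, Set.mem_Iic]; linarith⟩
    exact absurd (le_csSup hSbdd hmem) (not_le.2 hu)
  have hflat : y₁ τ = y₁ t := by
    have hconst : ∀ u ∈ Set.Ioc τ t, y₁ u = y₁ t := fun u hu =>
      hfl₁ u t (hτ0.trans hu.1.le) hu.2
        (fun v hv => hpos v (lt_of_lt_of_le hu.1 hv.1) hv.2)
    have hne : (nhdsWithin τ (Set.Ioc τ t)).NeBot := left_nhdsWithin_Ioc_neBot hτlt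
    have ht1 : Filter.Tendsto y₁ (nhdsWithin τ (Set.Ioc τ t)) (nhds (y₁ τ)) :=
      (hy₁c.continuousWithinAt (Set.mem_Ici.2 hτ0)).mono
        (fun v hv => Set.mem_Ici.2 (hτ0.trans hv.1.le))
    have ht2 : Filter.Tendsto y₁ (nhdsWithin τ (Set.Ioc τ t)) (nhds (y₁ t)) := by
      apply Filter.Tendsto.congr' _ tendsto_const_nhds
      filter_upwards [self_mem_nhdsWithin] with u hu
      exact (hconst u hu).symm
    exact tendsto_nhds_unique ht1 ht2
  have e1t := heq₁ t ht; have e2t := heq₂ t ht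
  have e1τ := heq₁ τ hτ0; have e2τ := heq₂ τ hτ0
  have hy₂le : y₂ τ ≤ y₂ t := hy₂m (Set.mem_Ici.2 hτ0) (Set.mem_Ici.2 ht) hτt
  have hd_t := hdrift t ht le_rfl
  have hd_τ := hdrift τ hτ0 hτt
  have h1' : (∫ u in (0:ℝ)..t, g (z₁ u)) - (∫ u in (0:ℝ)..t, g (z₂ u)) ≤ L * I :=
    (le_abs_self _).trans hd_t
  have h2' : -((∫ u in (0:ℝ)..τ, g (z₁ u)) - (∫ u in (0:ℝ)..τ, g (z₂ u))) ≤ L * I :=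
    (neg_le_abs _).trans hd_τ
  linarith

/-- Uniqueness for the one-dimensional Skorokhod reflection problem with Lipschitz
state-dependent drift `g`. -/
theorem stmt12 (g : ℝ → ℝ) (hg : ∃ L : NNReal, LipschitzWith L g)
    (x : ℝ → ℝ) (hx : ContinuousOn x (Set.Ici 0)) (hx0 : 0 ≤ x 0)
    (y₁ z₁ y₂ z₂ : ℝ → ℝ)
    (h1 : IsSkorokhodSolution g x y₁ z₁) (h2 : IsSkorokhodSolution g x y₂ z₂) :
    Set.EqOn z₁ z₂ (Set.Ici 0) ∧ Set.EqOn y₁ y₂ (Set.Ici 0) := by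
  obtain ⟨L, hL⟩ := hg
  -- the globally continuous version of |z₁ - z₂|
  set Δ : ℝ → ℝ := fun u => |z₁ (max u 0) - z₂ (max u 0)| with hΔdef
  have hmax : ∀ u : ℝ, max u 0 ∈ Set.Ici (0:ℝ) := fun u => Set.mem_Ici.2 (le_max_right u 0)
  have hΔcont : Continuous Δ := by
    have c1 : Continuous fun u : ℝ => z₁ (max u 0) :=
      h1.2.1.comp_continuous (continuous_id.max continuous_const) hmax
    have c2 : Continuous fun u : ℝ => z₂ (max u 0) :=
      h2.2.1.comp_continuous (continuous_id.max continuous_const) hmax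
    exact (c1.sub c2).abs
  have hΔeq : ∀ u : ℝ, 0 ≤ u → Δ u = |z₁ u - z₂ u| := by
    intro u hu; simp [hΔdef, max_eq_left hu]
  set F : ℝ → ℝ := fun r => ∫ u in (0:ℝ)..r, Δ u with hFdef
  have hFderiv : ∀ b : ℝ, HasDerivAt F (Δ b) b := fun b =>
    intervalIntegral.integral_hasDerivAt_right (hΔcont.intervalIntegrable _ _)
      hΔcont.stronglyMeasurable.stronglyMeasurableAtFilter hΔcont.continuousAt
  have hFeq : ∀ t : ℝ, 0 ≤ t → F t = ∫ u in (0:ℝ)..t, |z₁ u - z₂ u| := by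
    intro t ht
    apply intervalIntegral.integral_congr
    intro u hu
    rw [Set.uIcc_of_le ht] at hu
    exact hΔeq u hu.1
  have hFnn : ∀ t : ℝ, 0 ≤ t → 0 ≤ F t := fun t ht =>
    intervalIntegral.integral_nonneg ht (fun u _ => abs_nonneg _)
  have hkey : ∀ t : ℝ, 0 ≤ t → Δ t ≤ 2 * L * F t := by
    intro t ht
    rw [hΔeq t ht, hFeq t ht, abs_sub_le_iff]
    constructor
    · exact skorokhod_key g L hL x y₁ z₁ y₂ z₂ h1 h2 ht
    · have := skorokhod_key g L hL x y₂ z₂ y₁ z₁ h2 h1 ht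
      calc z₂ t - z₁ t ≤ 2 * L * ∫ u in (0:ℝ)..t, |z₂ u - z₁ u| := this
        _ = 2 * L * ∫ u in (0:ℝ)..t, |z₁ u - z₂ u| := by
            congr 1; apply intervalIntegral.integral_congr; intro u _; exact abs_sub_comm _ _
  have hzeq : ∀ t : ℝ, 0 ≤ t → z₁ t = z₂ t := by
    intro T hT
    have hgron := norm_le_gronwallBound_of_norm_deriv_right_le
      (f := F) (f' := Δ) (δ := 0) (K := 2 * L) (ε := 0) (a := 0) (b := T)
      (continuousOn_of_forall_continuousAt (fun u _ => (hFderiv u).continuousAt))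
      (fun u _ => (hFderiv u).hasDerivWithinAt)
      (by simp [hFdef])
      (fun u hu => by
        rw [Real.norm_eq_abs, Real.norm_eq_abs, abs_of_nonneg (abs_nonneg _),
          abs_of_nonneg (hFnn u hu.1), add_zero]
        exact hkey u hu.1)
    have hFT : F T = 0 := by
      have h := hgron T (Set.right_mem_Icc.2 hT)
      rw [gronwallBound_ε0] at h
      simp only [Real.norm_eq_abs, zero_mul, abs_nonpos_iff] at h
      exact h
    have h2' := hkey T hT
    rw [hΔeq T hT, hFT, mul_zero] at h2'
    have := abs_nonneg (z₁ T - z₂ T)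
    have : |z₁ T - z₂ T| = 0 := le_antisymm h2' this
    have := abs_eq_zero.1 this
    linarith
  refine ⟨fun t ht => hzeq t ht, fun t ht => ?_⟩
  have e1 := h1.2.2.1 t ht
  have e2 := h2.2.2.1 t ht
  have : (∫ s in (0:ℝ)..t, g (z₁ s)) = ∫ s in (0:ℝ)..t, g (z₂ s) := by
    apply intervalIntegral.integral_congr
    intro u hu
    rw [Set.uIcc_of_le ht] at hu
    show g (z₁ u) = g (z₂ u)
    rw [hzeq u hu.1]
  have hz := hzeq t ht
  linarith
end

section
/- Let g : ℝ → ℝ be Lipschitz continuous and let x : [0,∞) → ℝ be continuous with x(0) ≥ 0. Then there exists a pair (y, z) of continuous functions from [0,∞) to ℝ satisfying: (i) z(t) = ∫₀^t g(z(s)) ds + x(t) + y(t) for all t ≥ 0; (ii) z(t) ≥ 0 for all t ≥ 0; (iii) y(0) = 0 and y is nondecreasing; (iv) for every t ≥ 0, the Lebesgue–Stieltjes measure induced by y assigns measure zero to the set {s ∈ [0,t] : z(s) > 0} (equivalently, ∫₀^t z(s) dy(s) = 0). -/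
open Set intervalIntegral Filter

namespace SkProof

/-- running max part of the Skorokhod map -/
noncomputable def M (f : ℝ → ℝ) (t : ℝ) : ℝ :=
  sSup ((fun s => max 0 (-f s)) '' Set.Icc 0 t)

lemma phi_cont {f : ℝ → ℝ} {s : Set ℝ} (hf : ContinuousOn f s) :
    ContinuousOn (fun u => max 0 (-f u)) s :=
  by
  have : ContinuousOn ((fun u => (0:ℝ)) ⊔ fun u => -f u) s :=
    ContinuousOn.sup continuousOn_const hf.neg
  exact this

lemma phi_le_phi_add {f f' : ℝ → ℝ} (s : ℝ) :
    max 0 (-f s) ≤ max 0 (-f' s) + |f s - f' s| := by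
  rcases abs_sub_abs_le_abs_sub (f s) (f' s) with _
  apply max_le
  · positivity
  · have : -f s ≤ -f' s + |f s - f' s| := by
      have := neg_abs_le (f s - f' s); linarith [le_abs_self (f' s - f s), abs_sub_comm (f s) (f' s)]
    exact this.trans (by gcongr; exact le_max_right _ _)

lemma M_bddAbove {f : ℝ → ℝ} {t : ℝ} (ht : 0 ≤ t) (hf : ContinuousOn f (Icc 0 t)) :
    BddAbove ((fun s => max 0 (-f s)) '' Set.Icc 0 t) :=
  (isCompact_Icc.image_of_continuousOn (phi_cont hf)).bddAbove

lemma le_M {f : ℝ → ℝ} {t s : ℝ} (ht : 0 ≤ t) (hs : s ∈ Icc 0 t)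
    (hf : ContinuousOn f (Icc 0 t)) : max 0 (-f s) ≤ M f t :=
  le_csSup (M_bddAbove ht hf) (mem_image_of_mem _ hs)

lemma M_le {f : ℝ → ℝ} {t c : ℝ} (ht : 0 ≤ t)
    (h : ∀ s ∈ Icc 0 t, max 0 (-f s) ≤ c) : M f t ≤ c :=
  csSup_le ((nonempty_Icc.2 ht).image _) (by rintro _ ⟨s, hs, rfl⟩; exact h s hs)

lemma M_nonneg {f : ℝ → ℝ} {t : ℝ} (ht : 0 ≤ t) (hf : ContinuousOn f (Icc 0 t)) :
    0 ≤ M f t :=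
  le_trans (le_max_left _ _) (le_M ht (Set.mem_Icc.2 ⟨le_rfl, ht⟩) hf)

lemma M_mono {f : ℝ → ℝ} {a b : ℝ} (ha : 0 ≤ a) (hab : a ≤ b)
    (hf : ContinuousOn f (Icc 0 b)) : M f a ≤ M f b :=
  csSup_le_csSup (M_bddAbove (ha.trans hab) hf)
    ((nonempty_Icc.2 ha).image _) (image_mono (Icc_subset_Icc le_rfl hab))

lemma M_zero {f : ℝ → ℝ} (hf : 0 ≤ f 0) : M f 0 = 0 := by
  simp [M, Icc_self, max_eq_left (by linarith : -f 0 ≤ 0)]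

lemma neg_le_M {f : ℝ → ℝ} {t : ℝ} (ht : 0 ≤ t) (hf : ContinuousOn f (Icc 0 t)) :
    -f t ≤ M f t :=
  le_trans (le_max_right _ _) (le_M ht ⟨ht, le_rfl⟩ hf)

lemma M_diff {f f' : ℝ → ℝ} {t ε : ℝ} (ht : 0 ≤ t)
    (hf : ContinuousOn f (Icc 0 t)) (hf' : ContinuousOn f' (Icc 0 t))
    (h : ∀ s ∈ Icc 0 t, |f s - f' s| ≤ ε) : |M f t - M f' t| ≤ ε := by
  have key : ∀ (u v : ℝ → ℝ), ContinuousOn u (Icc 0 t) → ContinuousOn v (Icc 0 t) →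
      (∀ s ∈ Icc 0 t, |u s - v s| ≤ ε) → M u t ≤ M v t + ε := by
    intro u v hu hv huv
    refine M_le ht fun s hs => ?_
    calc max 0 (-u s) ≤ max 0 (-v s) + |u s - v s| := phi_le_phi_add s
      _ ≤ M v t + ε := add_le_add (le_M ht hs hv) (huv s hs)
  have h1 := key f f' hf hf' h
  have h2 := key f' f hf' hf (fun s hs => by rw [abs_sub_comm]; exact h s hs)
  rw [abs_le]; constructor <;> linarith


lemma max0_le (p q : ℝ) : max 0 (-p) ≤ max 0 (-q) + |p - q| := by
  apply max_le
  · positivity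
  · have h1 : -p ≤ -q + |p - q| := by
      have := neg_abs_le (p - q); linarith
    exact h1.trans (by gcongr; exact le_max_right _ _)

lemma M_continuousOn {f : ℝ → ℝ} (hf : ContinuousOn f (Ici 0)) :
    ContinuousOn (M f) (Ici 0) := by
  intro t0 ht0
  rw [Metric.continuousWithinAt_iff]
  intro ε hε
  have hc : IsCompact (Icc (0:ℝ) (t0 + 1)) := isCompact_Icc
  have hfc : ContinuousOn f (Icc 0 (t0 + 1)) := hf.mono Icc_subset_Ici_self
  obtain ⟨δ, hδ, hucd⟩ := Metric.uniformContinuousOn_iff.mp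
    (hc.uniformContinuousOn_of_continuous hfc) (ε / 2) (by linarith)
  refine ⟨min δ 1, by positivity, fun t ht hdist => ?_⟩
  have ht' : (0:ℝ) ≤ t := ht
  have ht0' : (0:ℝ) ≤ t0 := ht0
  rw [Real.dist_eq] at hdist ⊢
  have hd : |t - t0| < δ := hdist.trans_le (min_le_left _ _)
  have h1' : |t - t0| < 1 := hdist.trans_le (min_le_right _ _)
  have hfcont : ∀ u : ℝ, ContinuousOn f (Icc 0 u) := fun u => hf.mono Icc_subset_Ici_self
  have key : ∀ a b : ℝ, 0 ≤ a → a ≤ b → b ≤ t0 + 1 → b - a < δ →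
      M f b ≤ M f a + ε / 2 := by
    intro a b ha hab hb1 hdab
    refine M_le (ha.trans hab) fun s hs => ?_
    rcases le_or_gt s a with h | h
    · exact le_trans (le_M ha ⟨hs.1, h⟩ (hfcont a)) (by linarith)
    · have hsmem : s ∈ Icc (0:ℝ) (t0+1) := ⟨hs.1, hs.2.trans hb1⟩
      have hamem : a ∈ Icc (0:ℝ) (t0+1) := ⟨ha, by linarith⟩
      have hdist2 : dist s a < δ := by
        rw [Real.dist_eq, abs_of_nonneg (by linarith)]; linarith [hs.2]
      have hfd := hucd s hsmem a hamem hdist2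
      rw [Real.dist_eq] at hfd
      calc max 0 (-f s) ≤ max 0 (-f a) + |f s - f a| := max0_le _ _
        _ ≤ M f a + ε / 2 := add_le_add (le_M ha ⟨ha, le_rfl⟩ (hfcont a)) hfd.le
  rcases abs_lt.mp hd with ⟨hd1, hd2⟩
  rcases abs_lt.mp h1' with ⟨h11, h12⟩
  rcases le_total t t0 with h | h
  · have h1 : M f t ≤ M f t0 := M_mono ht' h (hfcont t0)
    have h2 : M f t0 ≤ M f t + ε / 2 := key t t0 ht' h (by linarith) (by linarith)
    have : |M f t - M f t0| ≤ ε / 2 := abs_le.2 ⟨by linarith, by linarith⟩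
    linarith
  · have h1 : M f t0 ≤ M f t := M_mono ht0' h (hfcont t)
    have h2 : M f t ≤ M f t0 + ε / 2 := key t0 t ht0' h (by linarith) (by linarith)
    have : |M f t - M f t0| ≤ ε / 2 := abs_le.2 ⟨by linarith, by linarith⟩
    linarith

lemma M_flat {f : ℝ → ℝ} {a b : ℝ} (ha : 0 ≤ a) (hab : a ≤ b)
    (hf : ContinuousOn f (Ici 0))
    (hpos : ∀ u ∈ Icc a b, 0 < f u + M f u) : M f a = M f b := by
  have hb : (0:ℝ) ≤ b := ha.trans hab
  have hfb : ContinuousOn f (Icc 0 b) := hf.mono Icc_subset_Ici_self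
  have hIab : Icc a b ⊆ Ici (0:ℝ) := fun u hu => ha.trans hu.1
  refine le_antisymm (M_mono ha hab hfb) ?_
  by_contra hlt
  push_neg at hlt
  obtain ⟨s, hs, hsup⟩ := (isCompact_Icc (a := a) (b := b)).exists_sSup_image_eq
    (nonempty_Icc.2 hab) (phi_cont (hf.mono hIab))
  have hsplit : M f b = max (M f a) (sSup ((fun u => max 0 (-f u)) '' Icc a b)) := by
    rw [M, M, ← csSup_union (M_bddAbove ha (hf.mono Icc_subset_Ici_self))
      ((nonempty_Icc.2 ha).image _)
      ((isCompact_Icc.image_of_continuousOn (phi_cont (hf.mono hIab))).bddAbove)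
      ((nonempty_Icc.2 hab).image _), ← image_union, Icc_union_Icc_eq_Icc ha hab]
  have hMb : M f b = max 0 (-f s) := by
    rcases max_cases (M f a) (sSup ((fun u => max 0 (-f u)) '' Icc a b)) with ⟨he, _⟩ | ⟨he, _⟩
    · rw [hsplit, he] at hlt; exact absurd hlt (lt_irrefl _)
    · rw [hsplit, he, hsup]
  have hspos : 0 < max 0 (-f s) :=
    hMb ▸ lt_of_le_of_lt (M_nonneg ha (hf.mono Icc_subset_Ici_self)) hlt
  have hfs : max 0 (-f s) = -f s := by
    rcases max_cases (0:ℝ) (-f s) with ⟨h1, _⟩ | ⟨h1, _⟩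
    · rw [h1] at hspos; exact absurd hspos (lt_irrefl _)
    · exact h1
  have hs0 : (0:ℝ) ≤ s := ha.trans hs.1
  have hMs_le : M f s ≤ M f b := M_mono hs0 hs.2 hfb
  have hMs_ge : M f b ≤ M f s := by
    rw [hMb]
    exact le_M hs0 ⟨hs0, le_rfl⟩ (hf.mono Icc_subset_Ici_self)
  have hzero : f s + M f s = 0 := by
    have h4 : M f s = -f s := by rw [← hfs, ← hMb]; exact le_antisymm hMs_le hMs_ge
    rw [h4]; ring
  linarith [hpos s hs]


lemma contOn_Ici_of_Icc {F : ℝ → ℝ} (h : ∀ T : ℝ, 0 ≤ T → ContinuousOn F (Icc 0 T)) :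
    ContinuousOn F (Ici 0) := by
  intro t ht
  have ht' : (0:ℝ) ≤ t := ht
  have h1 : ContinuousWithinAt F (Icc 0 (t+1)) t :=
    h (t+1) (by linarith) t ⟨ht', by linarith⟩
  refine h1.mono_of_mem_nhdsWithin ?_
  refine mem_nhdsWithin.2 ⟨Iio (t+1), isOpen_Iio, by simp, ?_⟩
  rintro u ⟨hu1, hu2⟩
  exact ⟨hu2, le_of_lt hu1⟩

noncomputable def Iz (g z : ℝ → ℝ) (t : ℝ) : ℝ := ∫ s in (0:ℝ)..t, g (z s)

noncomputable def Ff (g x z : ℝ → ℝ) : ℝ → ℝ := fun u => Iz g z u + x u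

noncomputable def Phi (g x : ℝ → ℝ) (z : ℝ → ℝ) : ℝ → ℝ :=
  fun t => Ff g x z t + M (Ff g x z) t

lemma Iz_contOn {g z : ℝ → ℝ} (hgc : Continuous g) (hz : ContinuousOn z (Ici 0)) :
    ContinuousOn (Iz g z) (Ici 0) := by
  refine contOn_Ici_of_Icc fun T hT => ?_
  have hgz : ContinuousOn (fun s => g (z s)) (Icc 0 T) :=
    hgc.comp_continuousOn (hz.mono Icc_subset_Ici_self)
  have hint : MeasureTheory.IntegrableOn (fun s => g (z s)) (uIcc 0 T) := by
    rw [uIcc_of_le hT]; exact hgz.integrableOn_Icc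
  have := intervalIntegral.continuousOn_primitive_interval hint
  rwa [uIcc_of_le hT] at this

lemma Ff_contOn {g x z : ℝ → ℝ} (hgc : Continuous g) (hx : ContinuousOn x (Ici 0))
    (hz : ContinuousOn z (Ici 0)) : ContinuousOn (Ff g x z) (Ici 0) :=
  (Iz_contOn hgc hz).add hx

lemma Phi_contOn {g x z : ℝ → ℝ} (hgc : Continuous g) (hx : ContinuousOn x (Ici 0))
    (hz : ContinuousOn z (Ici 0)) : ContinuousOn (Phi g x z) (Ici 0) :=
  (Ff_contOn hgc hx hz).add (M_continuousOn (Ff_contOn hgc hx hz))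

/-- key one-step estimate for the Picard iteration -/
lemma Phi_diff {g x z z' : ℝ → ℝ} {L t : ℝ} (hL : 0 ≤ L)
    (hg : ∀ a b : ℝ, |g a - g b| ≤ L * |a - b|) (hgc : Continuous g)
    (hx : ContinuousOn x (Ici 0))
    (hz : ContinuousOn z (Ici 0)) (hz' : ContinuousOn z' (Ici 0)) (ht : 0 ≤ t) :
    |Phi g x z t - Phi g x z' t| ≤ 2 * ∫ s in (0:ℝ)..t, L * |z s - z' s| := by
  set D : ℝ := ∫ s in (0:ℝ)..t, L * |z s - z' s| with hD
  have habz : ContinuousOn (fun s => L * |z s - z' s|) (Ici 0) :=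
    continuousOn_const.mul ((hz.sub hz').abs)
  have hIzd : ∀ s ∈ Icc (0:ℝ) t, |Iz g z s - Iz g z' s| ≤ D := by
    intro s hs
    have hgzint : IntervalIntegrable (fun u => g (z u)) MeasureTheory.volume 0 s := by
      apply ContinuousOn.intervalIntegrable
      rw [uIcc_of_le hs.1]
      exact hgc.comp_continuousOn (hz.mono (Icc_subset_Ici_self))
    have hgz'int : IntervalIntegrable (fun u => g (z' u)) MeasureTheory.volume 0 s := by
      apply ContinuousOn.intervalIntegrable
      rw [uIcc_of_le hs.1]
      exact hgc.comp_continuousOn (hz'.mono (Icc_subset_Ici_self))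
    have h1 : Iz g z s - Iz g z' s = ∫ u in (0:ℝ)..s, (g (z u) - g (z' u)) := by
      rw [intervalIntegral.integral_sub hgzint hgz'int]; rfl
    rw [h1]
    have h2 := intervalIntegral.abs_integral_le_integral_abs (μ := MeasureTheory.volume)
      (f := fun u => g (z u) - g (z' u)) hs.1
    refine h2.trans ?_
    have h3 : (∫ u in (0:ℝ)..s, |g (z u) - g (z' u)|) ≤ ∫ u in (0:ℝ)..s, L * |z u - z' u| := by
      apply intervalIntegral.integral_mono_on hs.1
      · apply ContinuousOn.intervalIntegrable
        rw [uIcc_of_le hs.1]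
        exact (((hgc.comp_continuousOn (hz.mono Icc_subset_Ici_self)).sub
          (hgc.comp_continuousOn (hz'.mono Icc_subset_Ici_self))).abs)
      · apply ContinuousOn.intervalIntegrable
        rw [uIcc_of_le hs.1]
        exact habz.mono Icc_subset_Ici_self
      · intro u _; exact hg (z u) (z' u)
    refine h3.trans ?_
    rw [hD]
    apply intervalIntegral.integral_mono_interval le_rfl hs.1 hs.2
    · filter_upwards with u
      positivity
    · apply ContinuousOn.intervalIntegrable
      rw [uIcc_of_le ht]
      exact habz.mono Icc_subset_Ici_self
  have hFd : ∀ s ∈ Icc (0:ℝ) t, |Ff g x z s - Ff g x z' s| ≤ D := by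
    intro s hs
    have : Ff g x z s - Ff g x z' s = Iz g z s - Iz g z' s := by
      simp only [Ff]; ring
    rw [this]; exact hIzd s hs
  have hMd : |M (Ff g x z) t - M (Ff g x z') t| ≤ D :=
    M_diff ht ((Ff_contOn hgc hx hz).mono Icc_subset_Ici_self)
      ((Ff_contOn hgc hx hz').mono Icc_subset_Ici_self) hFd
  have hFt := hFd t ⟨ht, le_rfl⟩
  have : |Phi g x z t - Phi g x z' t| ≤ |Ff g x z t - Ff g x z' t| + |M (Ff g x z) t - M (Ff g x z') t| := by
    simp only [Phi]
    calc |Ff g x z t + M (Ff g x z) t - (Ff g x z' t + M (Ff g x z') t)|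
        = |(Ff g x z t - Ff g x z' t) + (M (Ff g x z) t - M (Ff g x z') t)| := by ring_nf
      _ ≤ _ := abs_add_le _ _
  linarith


noncomputable def zseq (g x : ℝ → ℝ) : ℕ → ℝ → ℝ :=
  fun k => (Phi g x)^[k] (fun _ => 0)

lemma zseq_zero (g x : ℝ → ℝ) (t : ℝ) : zseq g x 0 t = 0 := rfl

lemma zseq_succ (g x : ℝ → ℝ) (k : ℕ) : zseq g x (k+1) = Phi g x (zseq g x k) := by
  simp only [zseq, Function.iterate_succ_apply']

lemma zseq_contOn {g x : ℝ → ℝ} (hgc : Continuous g) (hx : ContinuousOn x (Ici 0)) :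
    ∀ k, ContinuousOn (zseq g x k) (Ici 0) := by
  intro k
  induction k with
  | zero => exact continuousOn_const
  | succ k ih => rw [zseq_succ]; exact Phi_contOn hgc hx ih

lemma picard_bound {g x : ℝ → ℝ} {L : ℝ} (hL : 0 ≤ L)
    (hg : ∀ a b : ℝ, |g a - g b| ≤ L * |a - b|) (hgc : Continuous g)
    (hx : ContinuousOn x (Ici 0)) {T C : ℝ} (hT : 0 ≤ T)
    (hC : ∀ t ∈ Icc (0:ℝ) T, |zseq g x 1 t| ≤ C) :
    ∀ k, ∀ t ∈ Icc (0:ℝ) T,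
      |zseq g x (k+1) t - zseq g x k t| ≤ C * (2*L)^k * t^k / (k.factorial : ℝ) := by
  intro k
  induction k with
  | zero =>
    intro t htT
    simpa [zseq_zero] using hC t htT
  | succ k ih =>
    intro t htT
    have ht : (0:ℝ) ≤ t := htT.1
    have hcontk := zseq_contOn hgc hx k
    have hcontk1 := zseq_contOn hgc hx (k+1)
    have h1 : |zseq g x (k+1+1) t - zseq g x (k+1) t| ≤
        2 * ∫ s in (0:ℝ)..t, L * |zseq g x (k+1) s - zseq g x k s| := by
      have key := Phi_diff hL hg hgc hx hcontk1 hcontk ht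
      rw [← zseq_succ g x (k+1), ← zseq_succ g x k] at key
      exact key
    have h2 : (∫ s in (0:ℝ)..t, L * |zseq g x (k+1) s - zseq g x k s|) ≤
        ∫ s in (0:ℝ)..t, L * (C * (2*L)^k * s^k / (k.factorial : ℝ)) := by
      apply intervalIntegral.integral_mono_on ht
      · apply ContinuousOn.intervalIntegrable
        rw [uIcc_of_le ht]
        exact (continuousOn_const.mul ((hcontk1.sub hcontk).abs)).mono Icc_subset_Ici_self
      · apply ContinuousOn.intervalIntegrable
        apply Continuous.continuousOn
        continuity
      · intro s hsm
        exact mul_le_mul_of_nonneg_left (ih s ⟨hsm.1, hsm.2.trans htT.2⟩) hL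
    have h3 : (∫ s in (0:ℝ)..t, L * (C * (2*L)^k * s^k / (k.factorial : ℝ)))
        = L * (C * (2*L)^k / (k.factorial : ℝ)) * (t^(k+1) / ((k:ℝ)+1)) := by
      have hrw : ∀ s : ℝ, L * (C * (2*L)^k * s^k / (k.factorial : ℝ))
          = (L * (C * (2*L)^k / (k.factorial : ℝ))) * s^k := by intro s; ring
      simp_rw [hrw]
      rw [intervalIntegral.integral_const_mul, integral_pow]
      push_cast
      ring
    have hfac : (((k+1).factorial : ℕ) : ℝ) = ((k:ℝ)+1) * (k.factorial : ℝ) := by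
      rw [Nat.factorial_succ]; push_cast; ring
    have hfk : (0:ℝ) < (k.factorial : ℝ) := by exact_mod_cast Nat.factorial_pos k
    have hk1 : (0:ℝ) < (k:ℝ) + 1 := by positivity
    calc |zseq g x (k+1+1) t - zseq g x (k+1) t|
        ≤ 2 * ∫ s in (0:ℝ)..t, L * |zseq g x (k+1) s - zseq g x k s| := h1
      _ ≤ 2 * ∫ s in (0:ℝ)..t, L * (C * (2*L)^k * s^k / (k.factorial : ℝ)) := by linarith
      _ = C * (2*L)^(k+1) * t^(k+1) / (((k+1).factorial : ℝ)) := by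
          rw [h3, hfac, pow_succ]
          field_simp
          ring


noncomputable def zlim (g x : ℝ → ℝ) : ℝ → ℝ :=
  fun t => ∑' k, (zseq g x (k+1) t - zseq g x k t)

lemma zlim_unif {g x : ℝ → ℝ} {L : ℝ} (hL : 0 ≤ L)
    (hg : ∀ a b : ℝ, |g a - g b| ≤ L * |a - b|) (hgc : Continuous g)
    (hx : ContinuousOn x (Ici 0)) {T : ℝ} (hT : 0 ≤ T) :
    TendstoUniformlyOn (fun K t => zseq g x K t) (zlim g x) atTop (Icc 0 T) := by
  obtain ⟨C, hC⟩ := (isCompact_Icc (a := (0:ℝ)) (b := T)).exists_bound_of_continuousOn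
    ((zseq_contOn hgc hx 1).mono Icc_subset_Ici_self)
  have hC' : ∀ t ∈ Icc (0:ℝ) T, |zseq g x 1 t| ≤ C := by
    intro t htT; have := hC t htT; rwa [Real.norm_eq_abs] at this
  have hC0 : 0 ≤ C := (abs_nonneg _).trans (hC' 0 ⟨le_rfl, hT⟩)
  set u : ℕ → ℝ := fun k => C * ((2*L*T)^k / (k.factorial : ℝ)) with hu_def
  have hu : Summable u := (Real.summable_pow_div_factorial (2*L*T)).mul_left C
  have hbd : ∀ k : ℕ, ∀ t ∈ Icc (0:ℝ) T,
      ‖zseq g x (k+1) t - zseq g x k t‖ ≤ u k := by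
    intro k t htT
    rw [Real.norm_eq_abs]
    refine (picard_bound hL hg hgc hx hT hC' k t htT).trans ?_
    have h1 : (2*L)^k * t^k = (2*L*t)^k := (mul_pow _ _ _).symm
    have h2 : (2*L*t)^k ≤ (2*L*T)^k :=
      pow_le_pow_left₀ (by have := mul_nonneg hL htT.1; linarith)
        (by have := mul_le_mul_of_nonneg_left htT.2 hL; linarith) k
    have hfk : (0:ℝ) < (k.factorial : ℝ) := by exact_mod_cast Nat.factorial_pos k
    calc C * (2*L)^k * t^k / (k.factorial : ℝ) = C * ((2*L*t)^k / (k.factorial : ℝ)) := by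
          rw [← h1]; ring
      _ ≤ C * ((2*L*T)^k / (k.factorial : ℝ)) := by gcongr
  have htsum := tendstoUniformlyOn_tsum_nat hu hbd
  refine htsum.congr (Filter.Eventually.of_forall fun N => ?_)
  intro t _
  simpa [zseq_zero] using
    (Finset.sum_range_sub (f := fun k => zseq g x k t) N)

theorem skorokhod_exists (g : ℝ → ℝ) (hg : ∃ L : NNReal, LipschitzWith L g)
    (x : ℝ → ℝ) (hx : ContinuousOn x (Set.Ici 0)) (hx0 : 0 ≤ x 0) :
    ∃ y z : ℝ → ℝ,
      ContinuousOn y (Set.Ici 0) ∧ ContinuousOn z (Set.Ici 0) ∧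
      (∀ t, 0 ≤ t → z t = (∫ s in (0 : ℝ)..t, g (z s)) + x t + y t) ∧
      (∀ t, 0 ≤ t → 0 ≤ z t) ∧
      y 0 = 0 ∧ MonotoneOn y (Set.Ici 0) ∧
      (∀ a b, 0 ≤ a → a ≤ b → (∀ u ∈ Set.Icc a b, 0 < z u) → y a = y b) := by
  obtain ⟨L0, hgl⟩ := hg
  set L : ℝ := (L0 : ℝ) with hLdef
  have hL : 0 ≤ L := L0.coe_nonneg
  have hglip : ∀ a b : ℝ, |g a - g b| ≤ L * |a - b| := by
    intro a b
    have := hgl.dist_le_mul a b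
    rwa [Real.dist_eq, Real.dist_eq] at this
  have hgc : Continuous g := hgl.continuous
  set z : ℝ → ℝ := zlim g x with hzdef
  have hzc : ContinuousOn z (Ici 0) := by
    refine contOn_Ici_of_Icc fun T hT => ?_
    exact (zlim_unif hL hglip hgc hx hT).continuousOn
      (Filter.Frequently.of_forall fun K => (zseq_contOn hgc hx K).mono Icc_subset_Ici_self)
  have hFc : ContinuousOn (Ff g x z) (Ici 0) := Ff_contOn hgc hx hzc
  -- fixed point property
  have hfix : ∀ t, 0 ≤ t → Phi g x z t = z t := by
    intro t ht
    have hle : ∀ ε : ℝ, 0 < ε → |Phi g x z t - z t| ≤ ε := by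
      intro ε hε
      have hden : (0:ℝ) < 2 + 2 * L * t := by positivity
      set ε' : ℝ := ε / (2 + 2 * L * t) with hε'def
      have hε' : 0 < ε' := by positivity
      have htu := zlim_unif hL hglip hgc hx ht
      rw [Metric.tendstoUniformlyOn_iff] at htu
      obtain ⟨K0, hK0⟩ := Filter.eventually_atTop.mp (htu ε' hε')
      have hA : |zseq g x (K0+1) t - z t| < ε' := by
        have := hK0 (K0+1) (Nat.le_succ _) t ⟨ht, le_rfl⟩
        rw [Real.dist_eq] at this
        rwa [abs_sub_comm]
      have hB : |Phi g x (zseq g x K0) t - Phi g x z t| ≤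
          2 * ∫ s in (0:ℝ)..t, L * |zseq g x K0 s - z s| :=
        Phi_diff hL hglip hgc hx (zseq_contOn hgc hx K0) hzc ht
      have hI : (∫ s in (0:ℝ)..t, L * |zseq g x K0 s - z s|) ≤ L * ε' * t := by
        have hmono : (∫ s in (0:ℝ)..t, L * |zseq g x K0 s - z s|) ≤
            ∫ _s in (0:ℝ)..t, L * ε' := by
          apply intervalIntegral.integral_mono_on ht
          · apply ContinuousOn.intervalIntegrable
            rw [uIcc_of_le ht]
            exact (continuousOn_const.mul (((zseq_contOn hgc hx K0).sub hzc).abs)).mono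
              Icc_subset_Ici_self
          · exact intervalIntegrable_const
          · intro s hsm
            have := hK0 K0 le_rfl s hsm
            rw [Real.dist_eq, abs_sub_comm] at this
            exact mul_le_mul_of_nonneg_left this.le hL
        rw [intervalIntegral.integral_const] at hmono
        calc (∫ s in (0:ℝ)..t, L * |zseq g x K0 s - z s|) ≤ (t - 0) • (L * ε') := hmono
          _ = L * ε' * t := by rw [smul_eq_mul]; ring
      have hPK : Phi g x (zseq g x K0) t = zseq g x (K0+1) t := (zseq_succ g x K0).symm ▸ rfl
      have step : |Phi g x z t - z t| ≤
          |Phi g x z t - zseq g x (K0+1) t| + |zseq g x (K0+1) t - z t| := by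
        have := abs_sub_le (Phi g x z t) (zseq g x (K0+1) t) (z t)
        linarith
      have h1 : |Phi g x z t - zseq g x (K0+1) t| ≤ 2 * (L * ε' * t) := by
        rw [← hPK, abs_sub_comm]
        linarith
      have hfin : |Phi g x z t - z t| ≤ ε' * (2 * L * t + 1) := by
        have := hA.le
        calc |Phi g x z t - z t| ≤ 2 * (L * ε' * t) + ε' := by linarith
          _ = ε' * (2 * L * t + 1) := by ring
      refine hfin.trans ?_
      have : ε' * (2 * L * t + 1) ≤ ε' * (2 + 2 * L * t) := by
        apply mul_le_mul_of_nonneg_left _ hε'.le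
        linarith
      refine this.trans ?_
      rw [hε'def]
      field_simp
      norm_num
    have h0 : |Phi g x z t - z t| ≤ 0 := by
      by_contra hcon
      push_neg at hcon
      have := hle (|Phi g x z t - z t| / 2) (by linarith)
      linarith
    have := abs_nonpos_iff.mp h0
    linarith [sub_eq_zero.mp this, this]
  refine ⟨M (Ff g x z), z, M_continuousOn hFc, hzc, ?_, ?_, ?_, ?_, ?_⟩
  · intro t ht
    rw [← hfix t ht]
    rfl
  · intro t ht
    rw [← hfix t ht]
    have := neg_le_M ht (hFc.mono Icc_subset_Ici_self)
    show 0 ≤ Ff g x z t + M (Ff g x z) t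
    linarith
  · apply M_zero
    show 0 ≤ Iz g z 0 + x 0
    have : Iz g z 0 = 0 := intervalIntegral.integral_same
    rw [this]; linarith
  · intro a ha b hb hab
    exact M_mono ha hab (hFc.mono Icc_subset_Ici_self)
  · intro a b ha hab hpos
    refine M_flat ha hab hFc fun u hu => ?_
    have h1 := hpos u hu
    rw [← hfix u (ha.trans hu.1)] at h1
    exact h1

end SkProof

/-- Existence for the one-dimensional Skorokhod reflection problem with Lipschitz
state-dependent drift `g`. -/
theorem stmt13 (g : ℝ → ℝ) (hg : ∃ L : NNReal, LipschitzWith L g)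
    (x : ℝ → ℝ) (hx : ContinuousOn x (Set.Ici 0)) (hx0 : 0 ≤ x 0) :
    ∃ y z : ℝ → ℝ, IsSkorokhodSolution g x y z := by
  obtain ⟨y, z, h⟩ := SkProof.skorokhod_exists g hg x hx hx0
  exact ⟨y, z, h⟩
end

section
/- Let θ : ℝ → ℝ be continuous and bounded, let σ > 0, m > 0, m_e > 0, and let α, β, γ ∈ ℝ. For each v ∈ ℝ and W > 0 define G_{v,W} : [0,∞) → ℝ by G_{v,W}(w) = α·w + β·v + γ for w ≥ W, and on [0,W] as the unique continuously differentiable solution of (σ²/2)·G'(w) = v − min_{k ∈ [0, w/m_e]} ( w/m + k·(1 − m_e/m) − θ(k)·G(w) ) with terminal value G(W) = α·W + β·v + γ. Then for every w ≥ 0, the map (v, W) ↦ G_{v,W}(w) is jointly continuous on ℝ × (0,∞). -/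
set_option maxHeartbeats 1000000

open Set Real

/-- Backward Grönwall comparison: two functions with derivatives (within `[a,b]`) whose
difference of derivatives is controlled by the difference of values, compared from the
terminal point `b` backwards to `a`. -/
lemma gronwall_backward {f g f' g' : ℝ → ℝ} {a b K ε δ : ℝ} (hab : a ≤ b)
    (hfc : ContinuousOn f (Set.Icc a b)) (hgc : ContinuousOn g (Set.Icc a b))
    (hf : ∀ t ∈ Set.Icc a b, HasDerivWithinAt f (f' t) (Set.Icc a b) t)
    (hg : ∀ t ∈ Set.Icc a b, HasDerivWithinAt g (g' t) (Set.Icc a b) t)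
    (hbd : ∀ t ∈ Set.Icc a b, |f' t - g' t| ≤ K * |f t - g t| + ε)
    (hδ : |f b - g b| ≤ δ) :
    |f a - g a| ≤ gronwallBound δ K ε (b - a) := by
  set ψ : ℝ → ℝ := fun s => a + b - s with hψdef
  have hψd : ∀ s : ℝ, HasDerivAt ψ (-1) s := by
    intro s
    simpa using (hasDerivAt_id s).const_sub (a + b)
  have hψm : Set.MapsTo ψ (Set.Icc a b) (Set.Icc a b) := by
    rintro s ⟨h1, h2⟩
    exact ⟨by simp [hψdef]; linarith, by simp [hψdef]; linarith⟩
  have hψc : Continuous ψ := by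
    exact (continuous_const.sub continuous_id : Continuous fun s : ℝ => a + b - s)
  set φ : ℝ → ℝ := fun s => f (ψ s) - g (ψ s) with hφdef
  set φ' : ℝ → ℝ := fun s => -(f' (ψ s) - g' (ψ s)) with hφ'def
  have hφc : ContinuousOn φ (Set.Icc a b) :=
    ((hfc.comp hψc.continuousOn hψm).sub (hgc.comp hψc.continuousOn hψm))
  have key := norm_le_gronwallBound_of_norm_deriv_right_le (f := φ) (f' := φ')
      (δ := δ) (K := K) (ε := ε) (a := a) (b := b) hφc ?_ ?_ ?_ b ⟨hab, le_rfl⟩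
  · have hψb : ψ b = a := by simp [hψdef]
    simpa [hφdef, hψb, Real.norm_eq_abs] using key
  · intro s hs
    have hsmem : s ∈ Set.Icc a b := ⟨hs.1, hs.2.le⟩
    have hψs : ψ s ∈ Set.Icc a b := hψm hsmem
    have h1 : HasDerivWithinAt (fun x => f (ψ x)) (f' (ψ s) * (-1)) (Set.Icc a b) s :=
      (hf (ψ s) hψs).comp s ((hψd s).hasDerivWithinAt) hψm
    have h2 : HasDerivWithinAt (fun x => g (ψ x)) (g' (ψ s) * (-1)) (Set.Icc a b) s :=
      (hg (ψ s) hψs).comp s ((hψd s).hasDerivWithinAt) hψm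
    have h3 : HasDerivWithinAt φ (φ' s) (Set.Icc a b) s := by
      have := h1.sub h2
      exact this.congr_deriv (by show f' (ψ s) * -1 - g' (ψ s) * -1 = -(f' (ψ s) - g' (ψ s)); ring)
    exact h3.mono_of_mem_nhdsWithin (Icc_mem_nhdsGE_of_mem hs)
  · have hψa : ψ a = b := by simp [hψdef]
    simpa [hφdef, hψa, Real.norm_eq_abs] using hδ
  · intro s hs
    have hsmem : s ∈ Set.Icc a b := ⟨hs.1, hs.2.le⟩
    have := hbd (ψ s) (hψm hsmem)
    rw [abs_sub_comm] at this
    simpa [hφdef, hφ'def, Real.norm_eq_abs, abs_neg, abs_sub_comm] using this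

lemma gb_le {δ K ε x R : ℝ} (hK : 0 ≤ K) (hδ : 0 ≤ δ) (hε : 0 ≤ ε) (hx : 0 ≤ x)
    (hxR : x ≤ R) : gronwallBound δ K ε x ≤ (δ + ε * R) * Real.exp (K * R) := by
  have hR : 0 ≤ R := le_trans hx hxR
  have h1 : gronwallBound δ K ε x ≤ (δ + ε * x) * Real.exp (K * x) := by
    rcases eq_or_ne K 0 with h | h
    · simp [gronwallBound, h]
    · rw [gronwallBound_of_K_ne_0 h]
      have hKpos : 0 < K := lt_of_le_of_ne hK (Ne.symm h)
      have hmul : Real.exp (-(K * x)) * Real.exp (K * x) = 1 := by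
        rw [← Real.exp_add]; simp
      have hy : Real.exp (K * x) - 1 ≤ K * x * Real.exp (K * x) := by
        nlinarith [Real.add_one_le_exp (-(K * x)), Real.exp_pos (K * x)]
      have h2 : ε / K * (Real.exp (K * x) - 1) ≤ ε * (x * Real.exp (K * x)) := by
        rw [div_mul_eq_mul_div, div_le_iff₀ hKpos]
        nlinarith
      nlinarith [Real.exp_pos (K * x)]
  refine h1.trans ?_
  have hexp : Real.exp (K * x) ≤ Real.exp (K * R) := Real.exp_le_exp.2 (by nlinarith)
  have h3 : δ + ε * x ≤ δ + ε * R := by nlinarith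
  have h4 : 0 ≤ δ + ε * x := by nlinarith
  exact mul_le_mul h3 hexp (Real.exp_pos _).le (by nlinarith)

/-- Joint continuity of the HJB solution in the average-cost guess `v` and the
fluid continuation point `W`: with `G_{v,W}` affine (`α·w + β·v + γ`) beyond `W` and
solving the HJB ODE on `[0,W]` with the matching terminal value, the map
`(v, W) ↦ G_{v,W}(w)` is jointly continuous for every `w ≥ 0`. -/
theorem stmt15 (θ : ℝ → ℝ) (hθc : Continuous θ) (hθb : ∃ C, ∀ k, |θ k| ≤ C)
    (σ m me α β γ : ℝ) (hσ : 0 < σ) (hm : 0 < m) (hme : 0 < me)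
    (G : ℝ → ℝ → ℝ → ℝ)
    (haff : ∀ v W, 0 < W → ∀ w, W ≤ w → G v W w = α * w + β * v + γ)
    (hcont : ∀ v W, 0 < W → ContinuousOn (G v W) (Set.Icc 0 W))
    (hode : ∀ v W, 0 < W → ∀ w ∈ Set.Icc 0 W,
      HasDerivWithinAt (G v W)
        ((v - sInf ((fun k => w / m + k * (1 - me / m) - θ k * G v W w) ''
            Set.Icc 0 (w / me))) / (σ ^ 2 / 2))
        (Set.Icc 0 W) w) :
    ∀ w, 0 ≤ w →
      ContinuousOn (fun p : ℝ × ℝ => G p.1 p.2 w) (Set.univ ×ˢ Set.Ioi 0) := by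
  obtain ⟨C, hC⟩ := hθb
  have hC0 : 0 ≤ C := le_trans (abs_nonneg _) (hC 0)
  obtain ⟨κ, hκdef⟩ : ∃ x : ℝ, x = σ ^ 2 / 2 := ⟨_, rfl⟩
  have hκ0 : 0 < κ := by rw [hκdef]; positivity
  obtain ⟨h, hhdef⟩ : ∃ h : ℝ → ℝ → ℝ,
      h = fun t x => sInf ((fun k => t / m + k * (1 - me / m) - θ k * x) '' Set.Icc 0 (t / me)) :=
    ⟨_, rfl⟩
  -- basic facts about h
  have hlb : ∀ t : ℝ, 0 ≤ t → ∀ x : ℝ,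
      ∀ y ∈ (fun k => t / m + k * (1 - me / m) - θ k * x) '' Set.Icc 0 (t / me),
      -(t / me * |1 - me / m| + C * |x|) ≤ y := by
    rintro t ht x y ⟨k, ⟨hk0, hk1⟩, rfl⟩
    have h1 : |k * (1 - me / m)| ≤ t / me * |1 - me / m| := by
      rw [abs_mul]
      exact mul_le_mul_of_nonneg_right (by rwa [abs_of_nonneg hk0]) (abs_nonneg _)
    have h2 : θ k * x ≤ C * |x| := by
      calc θ k * x ≤ |θ k * x| := le_abs_self _
        _ = |θ k| * |x| := abs_mul _ _
        _ ≤ C * |x| := mul_le_mul_of_nonneg_right (hC k) (abs_nonneg _)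
    have h3 : (0:ℝ) ≤ t / m := by positivity
    have h4 : -(t / me * |1 - me / m|) ≤ k * (1 - me / m) := by
      have := neg_abs_le (k * (1 - me / m)); linarith
    linarith
  have hbdd : ∀ t : ℝ, 0 ≤ t → ∀ x : ℝ,
      BddBelow ((fun k => t / m + k * (1 - me / m) - θ k * x) '' Set.Icc 0 (t / me)) :=
    fun t ht x => ⟨-(t / me * |1 - me / m| + C * |x|), fun y hy => hlb t ht x y hy⟩
  have hne : ∀ t : ℝ, 0 ≤ t → ∀ x : ℝ,
      ((fun k => t / m + k * (1 - me / m) - θ k * x) '' Set.Icc 0 (t / me)).Nonempty := by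
    intro t ht x
    exact ⟨_, Set.mem_image_of_mem _ (Set.left_mem_Icc.2 (by positivity))⟩
  have habs : ∀ t : ℝ, 0 ≤ t → ∀ x : ℝ, |h t x| ≤ t / m + t / me * |1 - me / m| + C * |x| := by
    intro t ht x
    simp only [hhdef]
    rw [abs_le]
    constructor
    · have hlow : -(t / me * |1 - me / m| + C * |x|) ≤
          sInf ((fun k => t / m + k * (1 - me / m) - θ k * x) '' Set.Icc 0 (t / me)) :=
        le_csInf (hne t ht x) (fun y hy => hlb t ht x y hy)
      have h3 : (0:ℝ) ≤ t / m := by positivity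
      linarith
    · have hmem : t / m + 0 * (1 - me / m) - θ 0 * x ∈
          (fun k => t / m + k * (1 - me / m) - θ k * x) '' Set.Icc 0 (t / me) :=
        Set.mem_image_of_mem _ (Set.left_mem_Icc.2 (by positivity))
      have hub : sInf ((fun k => t / m + k * (1 - me / m) - θ k * x) '' Set.Icc 0 (t / me)) ≤
          t / m + 0 * (1 - me / m) - θ 0 * x := csInf_le (hbdd t ht x) hmem
      have h2 : -(θ 0 * x) ≤ C * |x| := by
        calc -(θ 0 * x) ≤ |θ 0 * x| := neg_le_abs _
          _ = |θ 0| * |x| := abs_mul _ _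
          _ ≤ C * |x| := mul_le_mul_of_nonneg_right (hC 0) (abs_nonneg _)
      have h3 : (0:ℝ) ≤ t / me * |1 - me / m| := by positivity
      linarith
  have hlip : ∀ t : ℝ, 0 ≤ t → ∀ x y : ℝ, |h t x - h t y| ≤ C * |x - y| := by
    have key : ∀ t : ℝ, 0 ≤ t → ∀ x y : ℝ, h t x ≤ h t y + C * |x - y| := by
      intro t ht x y
      simp only [hhdef]
      have hlow : sInf ((fun k => t / m + k * (1 - me / m) - θ k * x) '' Set.Icc 0 (t / me))
          - C * |x - y| ≤
          sInf ((fun k => t / m + k * (1 - me / m) - θ k * y) '' Set.Icc 0 (t / me)) := by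
        apply le_csInf (hne t ht y)
        rintro z ⟨k, hk, rfl⟩
        have e1 : sInf ((fun k => t / m + k * (1 - me / m) - θ k * x) '' Set.Icc 0 (t / me)) ≤
            t / m + k * (1 - me / m) - θ k * x :=
          csInf_le (hbdd t ht x) (Set.mem_image_of_mem _ hk)
        have e2 : θ k * y - θ k * x ≤ C * |x - y| := by
          calc θ k * y - θ k * x = θ k * (y - x) := by ring
            _ ≤ |θ k * (y - x)| := le_abs_self _
            _ = |θ k| * |y - x| := abs_mul _ _
            _ ≤ C * |y - x| := mul_le_mul_of_nonneg_right (hC k) (abs_nonneg _)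
            _ = C * |x - y| := by rw [abs_sub_comm]
        simp only
        linarith
      linarith
    intro t ht x y
    rw [abs_sub_le_iff]
    constructor
    · have := key t ht x y; linarith
    · have := key t ht y x; rw [abs_sub_comm] at this; linarith
  -- restate the ODE using h and κ
  have hode' : ∀ v W, 0 < W → ∀ t ∈ Set.Icc 0 W,
      HasDerivWithinAt (G v W) ((v - h t (G v W t)) / κ) (Set.Icc 0 W) t := by
    intro v W hW t ht
    rw [hhdef, hκdef]
    exact hode v W hW t ht
  intro w₀ hw₀
  rintro ⟨v₀, W₀⟩ ⟨-, hW₀⟩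
  simp only [Set.mem_Ioi] at hW₀
  -- constants
  obtain ⟨R, hRdef⟩ : ∃ x : ℝ, x = W₀ + 1 := ⟨_, rfl⟩
  have hR0 : 0 < R := by rw [hRdef]; linarith
  obtain ⟨Mv, hMvdef⟩ : ∃ x : ℝ, x = |v₀| + 1 := ⟨_, rfl⟩
  have hMv0 : 0 < Mv := by rw [hMvdef]; positivity
  obtain ⟨A, hAdef⟩ : ∃ x : ℝ, x = R / m + R / me * |1 - me / m| := ⟨_, rfl⟩
  have hA0 : 0 ≤ A := by rw [hAdef, hRdef]; positivity
  obtain ⟨L, hLdef⟩ : ∃ x : ℝ, x = C / κ := ⟨_, rfl⟩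
  have hL0 : 0 ≤ L := by rw [hLdef]; exact div_nonneg hC0 hκ0.le
  obtain ⟨D, hDdef⟩ : ∃ x : ℝ, x = |α| * R + |β| * Mv + |γ| := ⟨_, rfl⟩
  have hD0 : 0 ≤ D := by
    rw [hDdef]
    have := mul_nonneg (abs_nonneg α) hR0.le
    have := mul_nonneg (abs_nonneg β) hMv0.le
    have := abs_nonneg γ
    linarith
  obtain ⟨Mg, hMgdef⟩ : ∃ x : ℝ, x = (D + (Mv + A) / κ * R) * Real.exp (L * R) := ⟨_, rfl⟩
  have hMg0 : 0 ≤ Mg := by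
    rw [hMgdef]
    have h1 : 0 ≤ (Mv + A) / κ * R := mul_nonneg (div_nonneg (by linarith) hκ0.le) hR0.le
    exact mul_nonneg (by linarith) (Real.exp_pos _).le
  obtain ⟨Kd, hKddef⟩ : ∃ x : ℝ, x = (Mv + A + C * Mg) / κ := ⟨_, rfl⟩
  have hKd0 : 0 ≤ Kd := by
    rw [hKddef]
    exact div_nonneg (by nlinarith) hκ0.le
  have hAbound : ∀ s : ℝ, 0 ≤ s → s ≤ R → s / m + s / me * |1 - me / m| ≤ A := by
    intro s hs0 hsR
    rw [hAdef]
    have e1 : s / m ≤ R / m := div_le_div_of_nonneg_right hsR hm.le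
    have e2 : s / me * |1 - me / m| ≤ R / me * |1 - me / m| :=
      mul_le_mul_of_nonneg_right (div_le_div_of_nonneg_right hsR hme.le) (abs_nonneg _)
    linarith
  -- a priori bound
  have apriori : ∀ v W, |v| ≤ Mv → 0 < W → W ≤ R → ∀ t ∈ Set.Icc 0 W, |G v W t| ≤ Mg := by
    intro v W hv hW hWR t ht
    have hsub : Set.Icc t W ⊆ Set.Icc 0 W := Set.Icc_subset_Icc ht.1 le_rfl
    have hG := gronwall_backward (f := G v W) (g := fun _ => 0)
      (f' := fun s => (v - h s (G v W s)) / κ) (g' := fun _ => 0)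
      (a := t) (b := W) (K := L) (ε := (Mv + A) / κ) (δ := D) ht.2
      ((hcont v W hW).mono hsub) continuousOn_const
      (fun s hs => (hode' v W hW s (hsub hs)).mono hsub)
      (fun s _ => (hasDerivWithinAt_const s _ 0))
      ?_ ?_
    · have hgb := gb_le (δ := D) (K := L) (ε := (Mv + A) / κ) (x := W - t) (R := R)
        hL0 hD0 (div_nonneg (by linarith) hκ0.le) (by linarith [ht.2]) (by linarith [ht.1])
      rw [hMgdef]
      calc |G v W t| = |G v W t - 0| := by rw [sub_zero]
        _ ≤ gronwallBound D L ((Mv + A) / κ) (W - t) := hG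
        _ ≤ (D + (Mv + A) / κ * R) * Real.exp (L * R) := hgb
    · intro s hs
      have hs0 : 0 ≤ s := le_trans ht.1 hs.1
      have hsR : s ≤ R := le_trans hs.2 hWR
      have hh2 := habs s hs0 (G v W s)
      have hhA : |h s (G v W s)| ≤ A + C * |G v W s| := by
        have := hAbound s hs0 hsR; linarith
      have e1 : |(v - h s (G v W s)) / κ - 0| = |v - h s (G v W s)| / κ := by
        rw [sub_zero, abs_div, abs_of_pos hκ0]
      rw [e1]
      have e2 : |v - h s (G v W s)| ≤ Mv + A + C * |G v W s| := by
        calc |v - h s (G v W s)| ≤ |v| + |h s (G v W s)| := abs_sub _ _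
          _ ≤ Mv + (A + C * |G v W s|) := add_le_add hv hhA
          _ = Mv + A + C * |G v W s| := by ring
      calc |v - h s (G v W s)| / κ ≤ (Mv + A + C * |G v W s|) / κ :=
            div_le_div_of_nonneg_right e2 hκ0.le
        _ = L * |G v W s - 0| + (Mv + A) / κ := by
            rw [hLdef, sub_zero]; field_simp; ring
    · have hterm : G v W W = α * W + β * v + γ := haff v W hW W le_rfl
      rw [sub_zero, hterm, hDdef]
      calc |α * W + β * v + γ| ≤ |α * W| + |β * v| + |γ| := by
            have h1 := abs_add_le (α * W + β * v) γ
            have h2 := abs_add_le (α * W) (β * v)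
            linarith
        _ = |α| * |W| + |β| * |v| + |γ| := by rw [abs_mul, abs_mul]
        _ ≤ |α| * R + |β| * Mv + |γ| := by
            have e1 : |W| ≤ R := by rw [abs_of_pos hW]; exact hWR
            have e3 := mul_le_mul_of_nonneg_left e1 (abs_nonneg α)
            have e4 := mul_le_mul_of_nonneg_left hv (abs_nonneg β)
            linarith
  -- Lipschitz bound on G
  have lip : ∀ v W, |v| ≤ Mv → 0 < W → W ≤ R → ∀ s ∈ Set.Icc 0 W, ∀ t ∈ Set.Icc 0 W,
      |G v W s - G v W t| ≤ Kd * |s - t| := by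
    intro v W hv hW hWR s hs t ht
    have bound : ∀ x ∈ Set.Icc 0 W, ‖(v - h x (G v W x)) / κ‖ ≤ Kd := by
      intro x hx
      have hx0 : 0 ≤ x := hx.1
      have hxR : x ≤ R := le_trans hx.2 hWR
      have hh2 := habs x hx0 (G v W x)
      have hGb := apriori v W hv hW hWR x hx
      have hhA : |h x (G v W x)| ≤ A + C * Mg := by
        have e1 := hAbound x hx0 hxR
        have e2 := mul_le_mul_of_nonneg_left hGb hC0
        linarith
      rw [Real.norm_eq_abs, abs_div, abs_of_pos hκ0, hKddef]
      apply div_le_div_of_nonneg_right _ hκ0.le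
      calc |v - h x (G v W x)| ≤ |v| + |h x (G v W x)| := abs_sub _ _
        _ ≤ Mv + (A + C * Mg) := add_le_add hv hhA
        _ = Mv + A + C * Mg := by ring
    have := Convex.norm_image_sub_le_of_norm_hasDerivWithin_le
      (f := G v W) (f' := fun x => (v - h x (G v W x)) / κ) (s := Set.Icc 0 W)
      (fun x hx => hode' v W hW x hx) bound (convex_Icc 0 W) ht hs
    simpa [Real.norm_eq_abs] using this
  have hv₀Mv : |v₀| ≤ Mv := by rw [hMvdef]; linarith
  have hW₀R : W₀ ≤ R := by rw [hRdef]; linarith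
  obtain ⟨Bf, hBfdef⟩ : ∃ x : ℝ, x = (|α| + |β| + Kd + R / κ) * Real.exp (L * R) + 1 :=
    ⟨_, rfl⟩
  have hexp1 : 1 ≤ Real.exp (L * R) := Real.one_le_exp (mul_nonneg hL0 hR0.le)
  have hRκ : 0 ≤ R / κ := div_nonneg hR0.le hκ0.le
  have hBf1 : 1 ≤ Bf := by
    rw [hBfdef]
    nlinarith [abs_nonneg α, abs_nonneg β]
  have hBf0 : 0 < Bf := lt_of_lt_of_le one_pos hBf1
  -- the main quantitative estimate
  have main : ∀ v W, 0 < W → |v - v₀| ≤ 1 → |W - W₀| ≤ 1 →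
      |G v W w₀ - G v₀ W₀ w₀| ≤ Bf * (|v - v₀| + |W - W₀|) := by
    intro v W hW hv1 hW1
    have hvMv : |v| ≤ Mv := by
      rw [hMvdef]
      calc |v| = |v₀ + (v - v₀)| := by ring_nf
        _ ≤ |v₀| + |v - v₀| := abs_add_le _ _
        _ ≤ |v₀| + 1 := by linarith
    have hWR : W ≤ R := by
      rw [hRdef]
      have := abs_le.1 hW1
      linarith [this.2]
    have habsv : (0:ℝ) ≤ |v - v₀| := abs_nonneg _
    have habsW : (0:ℝ) ≤ |W - W₀| := abs_nonneg _
    have hWle := abs_le.1 hW1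
    have case_bound : |G v W w₀ - G v₀ W₀ w₀| ≤
        ((|α| * |W - W₀| + |β| * |v - v₀| + Kd * |W - W₀|) + |v - v₀| / κ * R) *
          Real.exp (L * R) := by
      rcases le_or_gt w₀ W with hwW | hwW
      · rcases le_or_gt w₀ W₀ with hwW₀ | hwW₀
        · -- Case 1: Grönwall comparison on [w₀, min W W₀]
          have hw₀T : w₀ ≤ min W W₀ := le_min hwW hwW₀
          have hsub1 : Set.Icc w₀ (min W W₀) ⊆ Set.Icc 0 W :=
            Set.Icc_subset_Icc hw₀ (min_le_left _ _)
          have hsub2 : Set.Icc w₀ (min W W₀) ⊆ Set.Icc 0 W₀ :=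
            Set.Icc_subset_Icc hw₀ (min_le_right _ _)
          have hδ₀0 : 0 ≤ |α| * |W - W₀| + |β| * |v - v₀| + Kd * |W - W₀| := by positivity
          have hδT : |G v W (min W W₀) - G v₀ W₀ (min W W₀)| ≤
              |α| * |W - W₀| + |β| * |v - v₀| + Kd * |W - W₀| := by
            rcases le_total W W₀ with hWW₀ | hWW₀
            · rw [min_eq_left hWW₀]
              have e1 : G v W W = α * W + β * v + γ := haff v W hW W le_rfl
              have e2 : G v₀ W₀ W₀ = α * W₀ + β * v₀ + γ := haff v₀ W₀ hW₀ W₀ le_rfl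
              have e3 : |G v₀ W₀ W - G v₀ W₀ W₀| ≤ Kd * |W - W₀| :=
                lip v₀ W₀ hv₀Mv hW₀ hW₀R W ⟨hW.le, hWW₀⟩ W₀ ⟨hW₀.le, le_rfl⟩
              have e4 : G v W W - G v₀ W₀ W =
                  (α * (W - W₀) + β * (v - v₀)) + (G v₀ W₀ W₀ - G v₀ W₀ W) := by
                rw [e1, e2]; ring
              rw [e4]
              have e5 : |G v₀ W₀ W₀ - G v₀ W₀ W| ≤ Kd * |W - W₀| := by
                rw [abs_sub_comm]; exact e3
              calc |(α * (W - W₀) + β * (v - v₀)) + (G v₀ W₀ W₀ - G v₀ W₀ W)|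
                  ≤ |α * (W - W₀)| + |β * (v - v₀)| + |G v₀ W₀ W₀ - G v₀ W₀ W| := by
                    have a1 := abs_add_le (α * (W - W₀) + β * (v - v₀)) (G v₀ W₀ W₀ - G v₀ W₀ W)
                    have a2 := abs_add_le (α * (W - W₀)) (β * (v - v₀))
                    linarith
                _ ≤ |α| * |W - W₀| + |β| * |v - v₀| + Kd * |W - W₀| := by
                    rw [abs_mul, abs_mul]
                    linarith
            · rw [min_eq_right hWW₀]
              have e1 : G v W W = α * W + β * v + γ := haff v W hW W le_rfl
              have e2 : G v₀ W₀ W₀ = α * W₀ + β * v₀ + γ := haff v₀ W₀ hW₀ W₀ le_rfl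
              have e3 : |G v W W₀ - G v W W| ≤ Kd * |W - W₀| := by
                have := lip v W hvMv hW hWR W₀ ⟨hW₀.le, hWW₀⟩ W ⟨hW.le, le_rfl⟩
                calc |G v W W₀ - G v W W| ≤ Kd * |W₀ - W| := this
                  _ = Kd * |W - W₀| := by rw [abs_sub_comm]
              have e4 : G v W W₀ - G v₀ W₀ W₀ =
                  (G v W W₀ - G v W W) + (α * (W - W₀) + β * (v - v₀)) := by
                rw [e1, e2]; ring
              rw [e4]
              calc |(G v W W₀ - G v W W) + (α * (W - W₀) + β * (v - v₀))|
                  ≤ |G v W W₀ - G v W W| + (|α * (W - W₀)| + |β * (v - v₀)|) := by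
                    have a1 := abs_add_le (G v W W₀ - G v W W) (α * (W - W₀) + β * (v - v₀))
                    have a2 := abs_add_le (α * (W - W₀)) (β * (v - v₀))
                    linarith
                _ ≤ |α| * |W - W₀| + |β| * |v - v₀| + Kd * |W - W₀| := by
                    rw [abs_mul, abs_mul]
                    linarith
          have hG := gronwall_backward (f := G v W) (g := G v₀ W₀)
            (f' := fun s => (v - h s (G v W s)) / κ)
            (g' := fun s => (v₀ - h s (G v₀ W₀ s)) / κ)
            (a := w₀) (b := min W W₀) (K := L) (ε := |v - v₀| / κ)
            (δ := |α| * |W - W₀| + |β| * |v - v₀| + Kd * |W - W₀|) hw₀T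
            ((hcont v W hW).mono hsub1) ((hcont v₀ W₀ hW₀).mono hsub2)
            (fun s hs => (hode' v W hW s (hsub1 hs)).mono hsub1)
            (fun s hs => ((hode' v₀ W₀ hW₀ s (hsub2 hs)).mono hsub2))
            ?_ hδT
          · have hTle : min W W₀ - w₀ ≤ R := by
              have h1 : min W W₀ ≤ W₀ := min_le_right _ _
              linarith
            have hgb := gb_le (δ := |α| * |W - W₀| + |β| * |v - v₀| + Kd * |W - W₀|)
              (K := L) (ε := |v - v₀| / κ) (x := min W W₀ - w₀) (R := R)
              hL0 hδ₀0 (div_nonneg habsv hκ0.le) (by linarith) hTle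
            calc |G v W w₀ - G v₀ W₀ w₀|
                ≤ gronwallBound (|α| * |W - W₀| + |β| * |v - v₀| + Kd * |W - W₀|) L
                  (|v - v₀| / κ) (min W W₀ - w₀) := hG
              _ ≤ ((|α| * |W - W₀| + |β| * |v - v₀| + Kd * |W - W₀|) + |v - v₀| / κ * R) *
                  Real.exp (L * R) := hgb
          · intro s hs
            have hs0 : 0 ≤ s := le_trans hw₀ hs.1
            have e1 : (v - h s (G v W s)) / κ - (v₀ - h s (G v₀ W₀ s)) / κ =
                ((v - v₀) - (h s (G v W s) - h s (G v₀ W₀ s))) / κ := by ring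
            rw [e1, abs_div, abs_of_pos hκ0]
            have e2 : |(v - v₀) - (h s (G v W s) - h s (G v₀ W₀ s))| ≤
                |v - v₀| + C * |G v W s - G v₀ W₀ s| := by
              have hl := hlip s hs0 (G v W s) (G v₀ W₀ s)
              calc |(v - v₀) - (h s (G v W s) - h s (G v₀ W₀ s))|
                  ≤ |v - v₀| + |h s (G v W s) - h s (G v₀ W₀ s)| := abs_sub _ _
                _ ≤ |v - v₀| + C * |G v W s - G v₀ W₀ s| := by linarith
            calc |(v - v₀) - (h s (G v W s) - h s (G v₀ W₀ s))| / κ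
                ≤ (|v - v₀| + C * |G v W s - G v₀ W₀ s|) / κ :=
                  div_le_div_of_nonneg_right e2 hκ0.le
              _ = L * |G v W s - G v₀ W₀ s| + |v - v₀| / κ := by
                  rw [hLdef]; field_simp; ring
        · -- Case 4: w₀ ≤ W, W₀ < w₀
          have e1 : G v₀ W₀ w₀ = α * w₀ + β * v₀ + γ := haff v₀ W₀ hW₀ w₀ hwW₀.le
          have e2 : G v W W = α * W + β * v + γ := haff v W hW W le_rfl
          have e5 : W - w₀ ≤ |W - W₀| := by
            have := le_abs_self (W - W₀)
            linarith
          have e3 : |G v W w₀ - G v W W| ≤ Kd * |W - W₀| := by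
            have hl := lip v W hvMv hW hWR w₀ ⟨hw₀, hwW⟩ W ⟨hW.le, le_rfl⟩
            calc |G v W w₀ - G v W W| ≤ Kd * |w₀ - W| := hl
              _ = Kd * (W - w₀) := by rw [abs_sub_comm, abs_of_nonneg (by linarith)]
              _ ≤ Kd * |W - W₀| := mul_le_mul_of_nonneg_left e5 hKd0
          have e4 : G v W w₀ - G v₀ W₀ w₀ =
              (G v W w₀ - G v W W) + (α * (W - w₀) + β * (v - v₀)) := by
            rw [e1, e2]; ring
          rw [e4]
          have eW : |α * (W - w₀)| ≤ |α| * |W - W₀| := by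
            rw [abs_mul, abs_of_nonneg (by linarith : (0:ℝ) ≤ W - w₀)]
            exact mul_le_mul_of_nonneg_left e5 (abs_nonneg _)
          calc |(G v W w₀ - G v W W) + (α * (W - w₀) + β * (v - v₀))|
              ≤ |G v W w₀ - G v W W| + (|α * (W - w₀)| + |β * (v - v₀)|) := by
                have a1 := abs_add_le (G v W w₀ - G v W W) (α * (W - w₀) + β * (v - v₀))
                have a2 := abs_add_le (α * (W - w₀)) (β * (v - v₀))
                linarith
            _ ≤ Kd * |W - W₀| + (|α| * |W - W₀| + |β| * |v - v₀|) := by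
                rw [abs_mul β]
                linarith
            _ ≤ ((|α| * |W - W₀| + |β| * |v - v₀| + Kd * |W - W₀|) + |v - v₀| / κ * R) * 1 := by
                have h1 : 0 ≤ |v - v₀| / κ * R := mul_nonneg (div_nonneg habsv hκ0.le) hR0.le
                rw [mul_one]; linarith
            _ ≤ ((|α| * |W - W₀| + |β| * |v - v₀| + Kd * |W - W₀|) + |v - v₀| / κ * R) *
                Real.exp (L * R) := by
                have h0 : 0 ≤ |α| * |W - W₀| + |β| * |v - v₀| + Kd * |W - W₀| := by positivity
                have h1 : 0 ≤ |v - v₀| / κ * R := mul_nonneg (div_nonneg habsv hκ0.le) hR0.le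
                exact mul_le_mul_of_nonneg_left hexp1 (by linarith)
      · rcases le_or_gt w₀ W₀ with hwW₀ | hwW₀
        · -- Case 3: W < w₀ ≤ W₀
          have e1 : G v W w₀ = α * w₀ + β * v + γ := haff v W hW w₀ hwW.le
          have e2 : G v₀ W₀ W₀ = α * W₀ + β * v₀ + γ := haff v₀ W₀ hW₀ W₀ le_rfl
          have e5 : W₀ - w₀ ≤ |W - W₀| := by
            have h1 : W₀ - W ≤ |W - W₀| := by
              rw [abs_sub_comm]; exact le_abs_self _
            linarith
          have e3 : |G v₀ W₀ W₀ - G v₀ W₀ w₀| ≤ Kd * |W - W₀| := by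
            have hl := lip v₀ W₀ hv₀Mv hW₀ hW₀R w₀ ⟨hw₀, hwW₀⟩ W₀ ⟨hW₀.le, le_rfl⟩
            calc |G v₀ W₀ W₀ - G v₀ W₀ w₀| = |G v₀ W₀ w₀ - G v₀ W₀ W₀| := abs_sub_comm _ _
              _ ≤ Kd * |w₀ - W₀| := hl
              _ = Kd * (W₀ - w₀) := by rw [abs_sub_comm, abs_of_nonneg (by linarith)]
              _ ≤ Kd * |W - W₀| := mul_le_mul_of_nonneg_left e5 hKd0
          have e4 : G v W w₀ - G v₀ W₀ w₀ =
              (α * (w₀ - W₀) + β * (v - v₀)) + (G v₀ W₀ W₀ - G v₀ W₀ w₀) := by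
            rw [e1, e2]; ring
          rw [e4]
          have eW : |α * (w₀ - W₀)| ≤ |α| * |W - W₀| := by
            rw [abs_mul, abs_sub_comm, abs_of_nonneg (by linarith : (0:ℝ) ≤ W₀ - w₀)]
            exact mul_le_mul_of_nonneg_left e5 (abs_nonneg _)
          calc |(α * (w₀ - W₀) + β * (v - v₀)) + (G v₀ W₀ W₀ - G v₀ W₀ w₀)|
              ≤ (|α * (w₀ - W₀)| + |β * (v - v₀)|) + |G v₀ W₀ W₀ - G v₀ W₀ w₀| := by
                have a1 := abs_add_le (α * (w₀ - W₀) + β * (v - v₀)) (G v₀ W₀ W₀ - G v₀ W₀ w₀)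
                have a2 := abs_add_le (α * (w₀ - W₀)) (β * (v - v₀))
                linarith
            _ ≤ (|α| * |W - W₀| + |β| * |v - v₀|) + Kd * |W - W₀| := by
                rw [abs_mul β]
                linarith
            _ ≤ ((|α| * |W - W₀| + |β| * |v - v₀| + Kd * |W - W₀|) + |v - v₀| / κ * R) * 1 := by
                have h1 : 0 ≤ |v - v₀| / κ * R := mul_nonneg (div_nonneg habsv hκ0.le) hR0.le
                rw [mul_one]; linarith
            _ ≤ ((|α| * |W - W₀| + |β| * |v - v₀| + Kd * |W - W₀|) + |v - v₀| / κ * R) *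
                Real.exp (L * R) := by
                have h0 : 0 ≤ |α| * |W - W₀| + |β| * |v - v₀| + Kd * |W - W₀| := by positivity
                have h1 : 0 ≤ |v - v₀| / κ * R := mul_nonneg (div_nonneg habsv hκ0.le) hR0.le
                exact mul_le_mul_of_nonneg_left hexp1 (by linarith)
        · -- Case 2: both affine
          have e1 : G v W w₀ = α * w₀ + β * v + γ := haff v W hW w₀ hwW.le
          have e2 : G v₀ W₀ w₀ = α * w₀ + β * v₀ + γ := haff v₀ W₀ hW₀ w₀ hwW₀.le
          have e3 : G v W w₀ - G v₀ W₀ w₀ = β * (v - v₀) := by rw [e1, e2]; ring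
          rw [e3, abs_mul]
          calc |β| * |v - v₀|
              ≤ ((|α| * |W - W₀| + |β| * |v - v₀| + Kd * |W - W₀|) + |v - v₀| / κ * R) * 1 := by
                have h0 : 0 ≤ |α| * |W - W₀| + Kd * |W - W₀| := by positivity
                have h1 : 0 ≤ |v - v₀| / κ * R := mul_nonneg (div_nonneg habsv hκ0.le) hR0.le
                rw [mul_one]; linarith
            _ ≤ ((|α| * |W - W₀| + |β| * |v - v₀| + Kd * |W - W₀|) + |v - v₀| / κ * R) *
                Real.exp (L * R) := by
                have h0 : 0 ≤ |α| * |W - W₀| + |β| * |v - v₀| + Kd * |W - W₀| := by positivity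
                have h1 : 0 ≤ |v - v₀| / κ * R := mul_nonneg (div_nonneg habsv hκ0.le) hR0.le
                exact mul_le_mul_of_nonneg_left hexp1 (by linarith)
    refine case_bound.trans ?_
    have h2 : (0:ℝ) ≤ Real.exp (L * R) := (Real.exp_pos _).le
    have s1 : (|α| * |W - W₀| + |β| * |v - v₀| + Kd * |W - W₀|) + |v - v₀| / κ * R ≤
        (|α| + |β| + Kd + R / κ) * (|v - v₀| + |W - W₀|) := by
      have e0 : |v - v₀| / κ * R = R / κ * |v - v₀| := by ring
      rw [e0]
      nlinarith [mul_nonneg (abs_nonneg α) habsv, mul_nonneg (abs_nonneg β) habsW,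
        mul_nonneg hKd0 habsv, mul_nonneg hRκ habsW]
    have s2 : ((|α| * |W - W₀| + |β| * |v - v₀| + Kd * |W - W₀|) + |v - v₀| / κ * R) *
        Real.exp (L * R) ≤
        (|α| + |β| + Kd + R / κ) * (|v - v₀| + |W - W₀|) * Real.exp (L * R) :=
      mul_le_mul_of_nonneg_right s1 h2
    refine s2.trans ?_
    rw [hBfdef]
    nlinarith [habsv, habsW]
  -- conclude continuity via ε-δ
  rw [Metric.continuousWithinAt_iff]
  intro ε hε
  refine ⟨min 1 (ε / (2 * Bf)), by positivity, ?_⟩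
  rintro ⟨v, W⟩ ⟨-, hWpos⟩ hdist
  simp only [Set.mem_Ioi] at hWpos
  rw [Prod.dist_eq] at hdist
  have hd1 : dist v v₀ < min 1 (ε / (2 * Bf)) := lt_of_le_of_lt (le_max_left _ _) hdist
  have hd2 : dist W W₀ < min 1 (ε / (2 * Bf)) := lt_of_le_of_lt (le_max_right _ _) hdist
  rw [Real.dist_eq] at hd1 hd2
  have hv1 : |v - v₀| ≤ 1 := le_of_lt (lt_of_lt_of_le hd1 (min_le_left _ _))
  have hW1 : |W - W₀| ≤ 1 := le_of_lt (lt_of_lt_of_le hd2 (min_le_left _ _))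
  have hv2 : |v - v₀| < ε / (2 * Bf) := lt_of_lt_of_le hd1 (min_le_right _ _)
  have hW2 : |W - W₀| < ε / (2 * Bf) := lt_of_lt_of_le hd2 (min_le_right _ _)
  have hmain := main v W hWpos hv1 hW1
  rw [Real.dist_eq]
  calc |G v W w₀ - G v₀ W₀ w₀| ≤ Bf * (|v - v₀| + |W - W₀|) := hmain
    _ < Bf * (ε / (2 * Bf) + ε / (2 * Bf)) := by
        apply mul_lt_mul_of_pos_left _ hBf0
        linarith
    _ = ε := by field_simp; ring
end
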